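/- arXiv:1703.03998 — 6 statements merged into one kernel-verified Lean document; each statement's English description precedes it below -/
import Mathlib

section
/- Suppose every edge of G is dominated and every edge of M is tight (with respect to y, 𝓑 and z). Then every augmenting path P with free endpoints f₁ and f₂ satisfies w(P) ≤ y(f₁) + y(f₂). In particular, if y takes the same value on all free vertices, then w(P) ≤ 2y(f) for every free vertex f. -/
open SimpleGraph

attribute [local instance] Classical.propDecidable

variable {V : Type*}

def IsMatchingSet (G : SimpleGraph V) (M : Finset (Sym2 V)) : Prop :=
  (∀ e ∈ M, e ∈ G.edgeSet) ∧
    ∀ e ∈ M, ∀ f ∈ M, e ≠ f → ∀ v : V, v ∈ e → v ∉ f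

def IsFree (M : Finset (Sym2 V)) (v : V) : Prop := ∀ e ∈ M, v ∉ e

def IsAlternating (M : Finset (Sym2 V)) {G : SimpleGraph V} {u v : V}
    (P : G.Walk u v) : Prop :=
  List.Chain' (fun e f => ¬(e ∈ M ↔ f ∈ M)) P.edges

def IsAugmenting (M : Finset (Sym2 V)) {G : SimpleGraph V} {f₁ f₂ : V}
    (P : G.Walk f₁ f₂) : Prop :=
  P.IsPath ∧ f₁ ≠ f₂ ∧ IsFree M f₁ ∧ IsFree M f₂ ∧ IsAlternating M P

noncomputable def pathWeight (w : Sym2 V → ℝ) (M : Finset (Sym2 V)) {G : SimpleGraph V}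
    {u v : V} (P : G.Walk u v) : ℝ :=
  ((P.edges.filter fun e => e ∉ M).map w).sum -
    ((P.edges.filter fun e => e ∈ M).map w).sum

def InternallyNearMatched (M : Finset (Sym2 V)) (B : Finset V) (b : V) : Prop :=
  b ∈ B ∧ (∀ v ∈ B, s(b, v) ∉ M) ∧
    ∀ v ∈ B, v ≠ b → ∃ u ∈ B, u ≠ v ∧ s(u, v) ∈ M

noncomputable def dualLoad (y : V → ℝ) (𝓑 : Finset (Finset V)) (z : Finset V → ℝ)
    (u v : V) : ℝ :=
  y u + y v + ∑ B ∈ 𝓑.filter (fun B => u ∈ B ∧ v ∈ B), z B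

def Dominated (w : Sym2 V → ℝ) (y : V → ℝ) (𝓑 : Finset (Finset V)) (z : Finset V → ℝ)
    (u v : V) : Prop :=
  w s(u, v) ≤ dualLoad y 𝓑 z u v

def Tight (w : Sym2 V → ℝ) (y : V → ℝ) (𝓑 : Finset (Finset V)) (z : Finset V → ℝ)
    (u v : V) : Prop :=
  w s(u, v) = dualLoad y 𝓑 z u v

lemma matching_partner_unique {G : SimpleGraph V} {M : Finset (Sym2 V)}
    (hM : IsMatchingSet G M) {a b c : V} (h1 : s(a, b) ∈ M) (h2 : s(a, c) ∈ M) :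
    b = c := by
  by_contra hbc
  have hne : s(a, b) ≠ s(a, c) := by
    intro h
    rw [Sym2.eq_iff] at h
    rcases h with ⟨_, h⟩ | ⟨h1', h2'⟩
    · exact hbc h
    · exact hbc (h2'.trans h1')
  exact hM.2 _ h1 _ h2 hne a (Sym2.mem_mk_left a b) (Sym2.mem_mk_left a c)

lemma free_eq_base {M : Finset (Sym2 V)} {B : Finset V} {bb f : V}
    (h : InternallyNearMatched M B bb) (hf : IsFree M f) (hfB : f ∈ B) : f = bb := by
  by_contra hne
  obtain ⟨u, _, _, hu⟩ := h.2.2 f hfB hne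
  exact hf _ hu (Sym2.mem_mk_right u f)

lemma inm_next {G : SimpleGraph V} {M : Finset (Sym2 V)} (hM : IsMatchingSet G M)
    {B : Finset V} {bb : V} (h : InternallyNearMatched M B bb) {x u : V}
    (hx : x ∈ B) (hxb : x ≠ bb) (hxu : s(x, u) ∈ M) : u ∈ B ∧ u ≠ bb := by
  obtain ⟨p, hpB, hpx, hpM⟩ := h.2.2 x hx hxb
  have hpx' : s(x, p) ∈ M := by rwa [Sym2.eq_swap] at hpM
  have hpu : p = u := matching_partner_unique hM hpx' hxu
  subst hpu
  refine ⟨hpB, fun hub => ?_⟩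
  subst hub
  exact h.2.1 x hx (by rwa [Sym2.eq_swap] at hxu)

lemma pathWeight_nil (w : Sym2 V → ℝ) (M : Finset (Sym2 V)) {G : SimpleGraph V} {u : V} :
    pathWeight w M (Walk.nil : G.Walk u u) = 0 := by
  simp [pathWeight]

lemma pathWeight_cons (w : Sym2 V → ℝ) (M : Finset (Sym2 V)) {G : SimpleGraph V}
    {u v x : V} (h : G.Adj u v) (q : G.Walk v x) :
    pathWeight w M (Walk.cons h q) =
      (if s(u, v) ∈ M then -(w s(u, v)) else w s(u, v)) + pathWeight w M q := by
  by_cases hm : s(u, v) ∈ M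
  · simp only [pathWeight, Walk.edges_cons, List.filter_cons, hm, if_pos]
    simp [hm]
    ring
  · simp only [pathWeight, Walk.edges_cons, List.filter_cons]
    simp [hm]
    ring

lemma ite_ineq {zB : ℝ} (hzB : 0 ≤ zB) (p1 p2 p3 p4 : Prop)
    [Decidable p1] [Decidable p2] [Decidable p3] [Decidable p4]
    (hK3 : p2 → p3) (hK4 : p1 → p2 → p4) (hK5 : p1 → ¬p3 → p4) :
    (if p1 then zB else 0) + (if p2 then zB else 0) ≤
      (if p3 then zB else 0) + (if p4 then zB else 0) := by
  have h0 : ∀ (p : Prop) (inst : Decidable p), (0:ℝ) ≤ @ite ℝ p inst zB 0 := by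
    intro p inst
    split_ifs <;> simp [hzB]
  by_cases h2 : p2
  · rw [if_pos h2, if_pos (hK3 h2)]
    by_cases h1 : p1
    · rw [if_pos h1, if_pos (hK4 h1 h2)]
    · rw [if_neg h1]
      have := h0 p4 ‹_›
      linarith
  · rw [if_neg h2]
    by_cases h1 : p1
    · rw [if_pos h1]
      by_cases h3 : p3
      · rw [if_pos h3]
        have := h0 p4 ‹_›
        linarith
      · rw [if_neg h3, if_pos (hK5 h1 h3)]
        linarith
    · rw [if_neg h1]
      have := h0 p3 ‹_›
      have := h0 p4 ‹_›
      linarith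

lemma key_bound (G : SimpleGraph V) (M : Finset (Sym2 V))
    (w : Sym2 V → ℝ) (y : V → ℝ) (𝓑 : Finset (Finset V)) (z : Finset V → ℝ)
    (base : Finset V → V)
    (hM : IsMatchingSet G M)
    (h𝓑 : ∀ B ∈ 𝓑, InternallyNearMatched M B (base B))
    (hz : ∀ B ∈ 𝓑, 0 ≤ z B)
    (hdom : ∀ u v : V, G.Adj u v → Dominated w y 𝓑 z u v)
    (htight : ∀ u v : V, s(u, v) ∈ M → Tight w y 𝓑 z u v)
    {f₂ : V} (hf₂ : IsFree M f₂) :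
    ∀ (n : ℕ) (v : V) (Q : G.Walk v f₂), Q.length = n → Q.IsPath → _root_.IsAlternating M Q →
      (∀ e ∈ Q.edges.head?, e ∉ M) → Q.edges ≠ [] →
      pathWeight w M Q ≤ y v + y f₂ +
        ∑ B ∈ 𝓑.filter (fun B => v ∈ B ∧ v ≠ base B ∧ base B ∈ Q.support), z B := by
  intro n
  induction n using Nat.strong_induction_on with
  | _ n IH =>
  intro v Q hlen hpath halt hhead hne
  cases Q with
  | nil => simp at hne
  | cons h q =>
    rename_i b
    cases q with
    | nil =>
      -- single edge v — f₂
      have he₁ : s(v, f₂) ∉ M := hhead _ (by simp)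
      have hd := hdom v f₂ h
      unfold Dominated dualLoad at hd
      have hpw : pathWeight w M (Walk.cons h Walk.nil) = w s(v, f₂) := by
        rw [pathWeight_cons, if_neg he₁, pathWeight_nil, add_zero]
      rw [hpw]
      have hsub : (∑ B ∈ 𝓑.filter (fun B => v ∈ B ∧ f₂ ∈ B), z B) ≤
          ∑ B ∈ 𝓑.filter (fun B => v ∈ B ∧ v ≠ base B ∧
            base B ∈ (Walk.cons h Walk.nil).support), z B := by
        apply Finset.sum_le_sum_of_subset_of_nonneg
        · intro B hB
          simp only [Finset.mem_filter] at hB ⊢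
          obtain ⟨hB𝓑, hvB, hfB⟩ := hB
          have hfb : f₂ = base B := free_eq_base (h𝓑 B hB𝓑) hf₂ hfB
          refine ⟨hB𝓑, hvB, fun hv => h.ne (hv.trans hfb.symm), ?_⟩
          simp [Walk.support_cons, ← hfb]
        · intro B hB _
          exact hz B (Finset.mem_filter.mp hB).1
      linarith
    | cons h' q' =>
      rename_i c
      have he₁ : s(v, b) ∉ M := hhead _ (by simp)
      simp only [_root_.IsAlternating, Walk.edges_cons] at halt
      rw [List.Chain', List.isChain_cons_cons] at halt
      have he₂ : s(b, c) ∈ M := by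
        by_contra hc
        exact halt.1 (iff_of_false he₁ hc)
      cases q' with
      | nil => exact absurd (Sym2.mem_mk_right b f₂) (hf₂ _ he₂)
      | cons h'' q'' =>
        rename_i d
        simp only [Walk.edges_cons] at halt
        rw [List.isChain_cons_cons] at halt
        -- halt : (¬(e₁∈M ↔ e₂∈M)) ∧ (¬(e₂∈M ↔ e₃∈M)) ∧ Chain' (e₃ :: rest)
        have he₃ : s(c, d) ∉ M := fun hm => halt.2.1 (iff_of_true he₂ hm)
        have hpath₂ : (Walk.cons h'' q'').IsPath := (hpath.of_cons).of_cons
        have halt₂ : _root_.IsAlternating M (Walk.cons h'' q'') := by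
          simp only [_root_.IsAlternating, Walk.edges_cons]
          exact halt.2.2
        have hhead₂ : ∀ e ∈ (Walk.cons h'' q'').edges.head?, e ∉ M := by
          intro e he'
          simp only [Walk.edges_cons, List.head?_cons, Option.mem_some_iff] at he'
          subst he'
          exact he₃
        have hlt : (Walk.cons h'' q'').length < n := by
          subst hlen
          simp [Walk.length_cons]
        have hIH := IH _ hlt c (Walk.cons h'' q'') rfl hpath₂ halt₂ hhead₂ (by simp)
        -- path structure facts
        have hvb : v ≠ b := h.ne
        have hvQ₂ : v ∉ (Walk.cons h'' q'').support := by
          rw [Walk.cons_isPath_iff] at hpath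
          intro hv
          refine hpath.2 ?_
          simp only [Walk.support_cons, List.mem_cons] at hv ⊢
          tauto
        -- weight equations
        have hd := hdom v b h
        unfold Dominated dualLoad at hd
        have ht := htight b c he₂
        unfold Tight dualLoad at ht
        have hpw : pathWeight w M (Walk.cons h (Walk.cons h' (Walk.cons h'' q''))) =
            w s(v, b) - w s(b, c) + pathWeight w M (Walk.cons h'' q'') := by
          rw [pathWeight_cons, pathWeight_cons, if_neg he₁, if_pos he₂]
          ring
        -- the key combinatorial sum inequality
        have hsum : (∑ B ∈ 𝓑.filter (fun B => v ∈ B ∧ b ∈ B), z B) +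
            (∑ B ∈ 𝓑.filter (fun B => c ∈ B ∧ c ≠ base B ∧
              base B ∈ (Walk.cons h'' q'').support), z B) ≤
            (∑ B ∈ 𝓑.filter (fun B => b ∈ B ∧ c ∈ B), z B) +
            (∑ B ∈ 𝓑.filter (fun B => v ∈ B ∧ v ≠ base B ∧
              base B ∈ (Walk.cons h (Walk.cons h' (Walk.cons h'' q''))).support), z B) := by
          rw [Finset.sum_filter, Finset.sum_filter, Finset.sum_filter, Finset.sum_filter,
            ← Finset.sum_add_distrib, ← Finset.sum_add_distrib]
          apply Finset.sum_le_sum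
          intro B hB
          have hzB := hz B hB
          have hBnm := h𝓑 B hB
          have hmono : base B ∈ (Walk.cons h'' q'').support →
              base B ∈ (Walk.cons h (Walk.cons h' (Walk.cons h'' q''))).support := by
            intro hmem
            simp only [Walk.support_cons, List.mem_cons] at hmem ⊢
            tauto
          have hbmem : (b : V) ∈ (Walk.cons h (Walk.cons h' (Walk.cons h'' q''))).support := by
            simp [Walk.support_cons]
          refine ite_ineq hzB _ _ _ _ ?_ ?_ ?_
          · rintro ⟨hcB, hcb, _⟩
            have := inm_next hM hBnm hcB hcb (by rwa [Sym2.eq_swap] at he₂)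
            exact ⟨this.1, hcB⟩
          · rintro ⟨hvB, _⟩ ⟨_, _, hbs⟩
            exact ⟨hvB, fun hv => hvQ₂ (hv ▸ hbs), hmono hbs⟩
          · rintro ⟨hvB, hbB⟩ h3
            have hbbase : b = base B := by
              by_contra hbb
              exact h3 ⟨hbB, (inm_next hM hBnm hbB hbb he₂).1⟩
            exact ⟨hvB, fun hv => hvb (hv.trans hbbase.symm), hbbase ▸ hbmem⟩
        rw [hpw]
        linarith

theorem weighted_dual_bound_on_augmenting_path
    {V : Type*} (G : SimpleGraph V) (M : Finset (Sym2 V))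
    (w : Sym2 V → ℝ) (y : V → ℝ) (𝓑 : Finset (Finset V)) (z : Finset V → ℝ)
    (base : Finset V → V)
    (hM : IsMatchingSet G M)
    (h𝓑 : ∀ B ∈ 𝓑, InternallyNearMatched M B (base B))
    (hz : ∀ B ∈ 𝓑, 0 ≤ z B)
    (hdom : ∀ u v : V, G.Adj u v → Dominated w y 𝓑 z u v)
    (htight : ∀ u v : V, s(u, v) ∈ M → Tight w y 𝓑 z u v)
    {f₁ f₂ : V} (P : G.Walk f₁ f₂) (hP : IsAugmenting M P) :
    pathWeight w M P ≤ y f₁ + y f₂ ∧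
      ((∀ u v : V, IsFree M u → IsFree M v → y u = y v) →
        ∀ f : V, IsFree M f → pathWeight w M P ≤ 2 * y f) := by
  obtain ⟨hpath, hne12, hfree₁, hfree₂, halt⟩ := hP
  have hb1 : pathWeight w M P ≤ y f₁ + y f₂ := by
    cases P with
    | nil => exact absurd rfl hne12
    | cons h q =>
      rename_i b
      have hhead : ∀ e ∈ (Walk.cons h q).edges.head?, e ∉ M := by
        intro e he'
        simp only [Walk.edges_cons, List.head?_cons, Option.mem_some_iff] at he'
        subst he'
        intro hm
        exact hfree₁ _ hm (Sym2.mem_mk_left _ _)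
      have hkey := key_bound G M w y 𝓑 z base hM h𝓑 hz hdom htight hfree₂
        (Walk.cons h q).length f₁ (Walk.cons h q) rfl hpath halt hhead (by simp)
      have hempty : 𝓑.filter (fun B => f₁ ∈ B ∧ f₁ ≠ base B ∧
          base B ∈ (Walk.cons h q).support) = ∅ := by
        rw [Finset.filter_eq_empty_iff]
        rintro B hB ⟨hf1B, hne, _⟩
        exact hne (free_eq_base (h𝓑 B hB) hfree₁ hf1B)
      rw [hempty, Finset.sum_empty, add_zero] at hkey
      exact hkey
  refine ⟨hb1, fun hy f hf => ?_⟩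
  have h1 := hy f₁ f hfree₁ hf
  have h2 := hy f₂ f hfree₂ hf
  linarith
end

section
/- Let B ⊆ V be internally near-matched for M with base vertex b. Then every augmenting path P satisfies |{e ∈ P \ M : e ∈ γ(B)}| ≤ |{e ∈ P ∩ M : e ∈ γ(B)}|, i.e., P contains at most as many unmatched edges with both ends in B as matched edges with both ends in B. -/
open SimpleGraph

attribute [local instance] Classical.propDecidable

variable {V : Type*}

lemma filt_len (p : Sym2 V → Prop) [DecidablePred p] (e : Sym2 V) (l : List (Sym2 V)) :
    ((e::l).filter fun x => p x).length = (if p e then 1 else 0) + ((l.filter fun x => p x)).length := by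
  by_cases h : p e <;> simp [List.filter_cons, h, Nat.add_comm]

lemma gamma_iff {B : Finset V} (u v : V) : (∀ x ∈ s(u,v), x ∈ B) ↔ u ∈ B ∧ v ∈ B := by
  constructor
  · intro h; exact ⟨h u (by simp), h v (by simp)⟩
  · rintro ⟨h1,h2⟩ x hx
    rcases Sym2.mem_iff.mp hx with rfl|rfl <;> assumption

lemma matched_eq {G : SimpleGraph V} {M : Finset (Sym2 V)} (hM : IsMatchingSet G M)
    {e f : Sym2 V} (he : e ∈ M) (hf : f ∈ M)
    {v : V} (hv : v ∈ e) (hv' : v ∈ f) : e = f := by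
  by_contra hne
  exact hM.2 e he f hf hne v hv hv'

lemma not_free_of_mem {M : Finset (Sym2 V)} {e : Sym2 V} (he : e ∈ M) {v : V} (hv : v ∈ e) :
    ¬ IsFree M v := fun h => h e he hv

lemma key (G : SimpleGraph V) (M : Finset (Sym2 V)) (hM : IsMatchingSet G M)
    (B : Finset V) (b : V) (hB : InternallyNearMatched M B b)
    {f₂ : V} (hf₂ : IsFree M f₂) :
    ∀ n : ℕ, ∀ u : V, ∀ Q : G.Walk u f₂, Q.length = n → Q.IsPath →
      IsAlternating M Q → (∀ e ∈ Q.edges.head?, e ∉ M) →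
      (((u ∈ B → u = b) →
          (Q.edges.filter fun e => e ∉ M ∧ ∀ x ∈ e, x ∈ B).length ≤
          (Q.edges.filter fun e => e ∈ M ∧ ∀ x ∈ e, x ∈ B).length) ∧
       (u ∈ B → u ≠ b →
          ((Q.edges.filter fun e => e ∉ M ∧ ∀ x ∈ e, x ∈ B).length ≤
           (Q.edges.filter fun e => e ∈ M ∧ ∀ x ∈ e, x ∈ B).length + 1 ∧
           (b ∉ Q.support →
            (Q.edges.filter fun e => e ∉ M ∧ ∀ x ∈ e, x ∈ B).length ≤
            (Q.edges.filter fun e => e ∈ M ∧ ∀ x ∈ e, x ∈ B).length)))) := by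
  intro n
  induction n using Nat.strong_induction_on with
  | _ n ih =>
  intro u Q hlen hpath halt hhead
  cases Q with
  | nil =>
      refine ⟨fun _ => by simp, fun huB hub => ?_⟩
      obtain ⟨x, hxB, hxu, hxM⟩ := hB.2.2 f₂ huB hub
      exact absurd hf₂ (not_free_of_mem hxM (Sym2.mem_mk_right x f₂))
  | cons h Q' =>
    rename_i v
    have he' : s(u,v) ∉ M := hhead _ (by simp)
    cases Q' with
    | nil =>
        -- single edge s(u, f₂)
        have hne : u ≠ f₂ := G.ne_of_adj h
        have hedges : (Walk.cons h .nil).edges = [s(u,f₂)] := by simp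
        refine ⟨?_, fun huB hub => ⟨?_, ?_⟩⟩
        · intro huA
          rw [hedges, filt_len, filt_len]
          have hneg : ¬ (s(u,f₂) ∉ M ∧ ∀ x ∈ s(u,f₂), x ∈ B) := by
            rintro ⟨-, hg⟩
            obtain ⟨huB, hvB⟩ := (gamma_iff u f₂).mp hg
            have hub := huA huB
            have hvb : f₂ ≠ b := by rintro rfl; exact hne hub
            obtain ⟨x, hxB, hxv, hxM⟩ := hB.2.2 f₂ hvB hvb
            exact not_free_of_mem hxM (Sym2.mem_mk_right x f₂) hf₂
          rw [if_neg hneg]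
          simp
        · rw [hedges, filt_len, filt_len]
          simp only [List.filter_nil, List.length_nil]
          split_ifs <;> omega
        · intro hbs
          have hvb : f₂ ≠ b := by
            rintro rfl; exact hbs (by simp)
          rw [hedges, filt_len, filt_len]
          have hneg : ¬ (s(u,f₂) ∉ M ∧ ∀ x ∈ s(u,f₂), x ∈ B) := by
            rintro ⟨-, hg⟩
            obtain ⟨huB', hvB⟩ := (gamma_iff u f₂).mp hg
            obtain ⟨x, hxB, hxv, hxM⟩ := hB.2.2 f₂ hvB hvb
            exact not_free_of_mem hxM (Sym2.mem_mk_right x f₂) hf₂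
          rw [if_neg hneg]
          simp
    | cons h2 Q'' =>
      rename_i w
      have hvw : v ≠ w := G.ne_of_adj h2
      have hedges : (Walk.cons h (Walk.cons h2 Q'')).edges
          = s(u,v) :: s(v,w) :: Q''.edges := by simp
      have hsupp : (Walk.cons h (Walk.cons h2 Q'')).support
          = u :: v :: Q''.support := by simp
      -- alternation facts
      have halt0 : List.Chain' (fun e f => ¬(e ∈ M ↔ f ∈ M))
          ((Walk.cons h (Walk.cons h2 Q'')).edges) := halt
      rw [hedges] at halt0
      have halt1 := List.isChain_cons_cons.mp halt0
      have he'' : s(v,w) ∈ M := by tauto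
      have halt2 := halt1.2
      have halt'' : IsAlternating M Q'' := (List.isChain_cons.mp halt2).2
      have hhead'' : ∀ e ∈ Q''.edges.head?, e ∉ M := by
        intro e hee
        have := (List.isChain_cons.mp halt2).1 e hee
        tauto
      -- path facts
      rw [Walk.cons_isPath_iff] at hpath
      have husup := hpath.2
      have hpath' := hpath.1
      rw [Walk.cons_isPath_iff] at hpath'
      have hpath'' := hpath'.1
      have hvsup := hpath'.2
      have hlen'' : Q''.length < n := by
        subst hlen; simp [Walk.length_cons]
      have IH := ih Q''.length hlen'' w Q'' rfl hpath'' halt'' hhead''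
      -- count equations
      have hneg1 : ¬ (s(v,w) ∉ M ∧ ∀ x ∈ s(v,w), x ∈ B) := fun hc => hc.1 he''
      have hneg2 : ¬ (s(u,v) ∈ M ∧ ∀ x ∈ s(u,v), x ∈ B) := fun hc => he' hc.1
      have hcuE : ((Walk.cons h (Walk.cons h2 Q'')).edges.filter
            fun e => e ∉ M ∧ ∀ x ∈ e, x ∈ B).length
          = (if (s(u,v) ∉ M ∧ ∀ x ∈ s(u,v), x ∈ B) then 1 else 0)
            + (Q''.edges.filter fun e => e ∉ M ∧ ∀ x ∈ e, x ∈ B).length := by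
        rw [hedges, filt_len, filt_len, if_neg hneg1]; omega
      have hcmE : ((Walk.cons h (Walk.cons h2 Q'')).edges.filter
            fun e => e ∈ M ∧ ∀ x ∈ e, x ∈ B).length
          = (if (s(v,w) ∈ M ∧ ∀ x ∈ s(v,w), x ∈ B) then 1 else 0)
            + (Q''.edges.filter fun e => e ∈ M ∧ ∀ x ∈ e, x ∈ B).length := by
        rw [hedges, filt_len, filt_len, if_neg hneg2]; omega
      by_cases hvB : v ∈ B
      · by_cases hvb : v = b
        · -- v = b : e'' leaves B
          have hwB : w ∉ B := fun hwB => hB.2.1 w hwB (hvb ▸ he'')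
          have hA'' := IH.1 (fun hw => absurd hw hwB)
          have hmneg : ¬ (s(v,w) ∈ M ∧ ∀ x ∈ s(v,w), x ∈ B) := by
            rintro ⟨-, hg⟩; exact hwB ((gamma_iff v w).mp hg).2
          refine ⟨?_, fun huB hub => ⟨?_, ?_⟩⟩
          · intro huA
            have huneg : ¬ (s(u,v) ∉ M ∧ ∀ x ∈ s(u,v), x ∈ B) := by
              rintro ⟨-, hg⟩
              have := huA ((gamma_iff u v).mp hg).1
              exact G.ne_of_adj h (this.trans hvb.symm)
            rw [hcuE, hcmE, if_neg huneg, if_neg hmneg]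
            omega
          · rw [hcuE, hcmE, if_neg hmneg]
            split_ifs <;> omega
          · intro hbs
            exact absurd (by rw [hsupp, ← hvb]; simp) hbs
        · -- v ∈ B, v ≠ b : mate of v is w
          obtain ⟨x, hxB, hxv, hxM⟩ := hB.2.2 v hvB hvb
          have hEq : s(v,w) = s(x,v) :=
            matched_eq hM he'' hxM (Sym2.mem_mk_left v w) (Sym2.mem_mk_right x v)
          have hwx : w = x := by
            rcases Sym2.eq_iff.mp hEq with ⟨hf, hs⟩ | ⟨-, hs⟩
            · exact absurd hs.symm hvw
            · exact hs
          subst hwx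
          have hwB : w ∈ B := hxB
          have hwb : w ≠ b := by
            rintro rfl
            exact hB.2.1 v hvB (by rwa [Sym2.eq_swap] at he'')
          have hmpos : (s(v,w) ∈ M ∧ ∀ x ∈ s(v,w), x ∈ B) :=
            ⟨he'', (gamma_iff v w).mpr ⟨hvB, hwB⟩⟩
          have IHB := IH.2 hwB hwb
          refine ⟨?_, fun huB hub => ⟨?_, ?_⟩⟩
          · intro huA
            rw [hcuE, hcmE, if_pos hmpos]
            by_cases huB : u ∈ B
            · have hub := huA huB
              have hbs'' : b ∉ Q''.support := by
                intro hbs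
                exact husup (by rw [hub, Walk.support_cons]; exact List.mem_cons_of_mem _ hbs)
              have := IHB.2 hbs''
              split_ifs <;> omega
            · have huneg : ¬ (s(u,v) ∉ M ∧ ∀ x ∈ s(u,v), x ∈ B) := by
                rintro ⟨-, hg⟩; exact huB ((gamma_iff u v).mp hg).1
              rw [if_neg huneg]
              have := IHB.1
              omega
          · rw [hcuE, hcmE, if_pos hmpos]
            have := IHB.1
            split_ifs <;> omega
          · intro hbs
            rw [hsupp] at hbs
            have hbs'' : b ∉ Q''.support := fun hc => hbs (by simp [hc])
            have := IHB.2 hbs''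
            rw [hcuE, hcmE, if_pos hmpos]
            split_ifs <;> omega
      · -- v ∉ B
        have huneg : ¬ (s(u,v) ∉ M ∧ ∀ x ∈ s(u,v), x ∈ B) := by
          rintro ⟨-, hg⟩; exact hvB ((gamma_iff u v).mp hg).2
        have hmneg : ¬ (s(v,w) ∈ M ∧ ∀ x ∈ s(v,w), x ∈ B) := by
          rintro ⟨-, hg⟩; exact hvB ((gamma_iff v w).mp hg).1
        have hwA : w ∈ B → w = b := by
          intro hwB
          by_contra hwb
          obtain ⟨x, hxB, hxw, hxM⟩ := hB.2.2 w hwB hwb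
          have hEq : s(v,w) = s(x,w) :=
            matched_eq hM he'' hxM (Sym2.mem_mk_right v w) (Sym2.mem_mk_right x w)
          have hvx : v = x := by
            rcases Sym2.eq_iff.mp hEq with ⟨hf, -⟩ | ⟨hf, hs⟩
            · exact hf
            · exact absurd hf hvw
          exact hvB (hvx ▸ hxB)
        have hA'' := IH.1 hwA
        refine ⟨?_, fun huB hub => ⟨?_, ?_⟩⟩ <;>
          (intros; rw [hcuE, hcmE, if_neg huneg, if_neg hmneg]; omega)

theorem augmenting_path_unmatched_le_matched_in_blossom
    {V : Type*} (G : SimpleGraph V) (M : Finset (Sym2 V))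
    (B : Finset V) (b : V)
    (hM : IsMatchingSet G M)
    (hB : InternallyNearMatched M B b)
    {f₁ f₂ : V} (P : G.Walk f₁ f₂) (hP : IsAugmenting M P) :
    (P.edges.filter fun e => e ∉ M ∧ ∀ x ∈ e, x ∈ B).length ≤
      (P.edges.filter fun e => e ∈ M ∧ ∀ x ∈ e, x ∈ B).length := by
  obtain ⟨hpath, hne, hfree1, hfree2, halt⟩ := hP
  have hhead : ∀ e ∈ P.edges.head?, e ∉ M := by
    cases P with
    | nil => simp
    | cons h Q =>
        rename_i v
        intro e he hem
        have he2 : e = s(f₁, v) := by simpa using he.symm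
        subst he2
        exact hfree1 _ hem (Sym2.mem_mk_left _ _)
  have hA : f₁ ∈ B → f₁ = b := by
    intro h1B
    by_contra h1b
    obtain ⟨x, hxB, hxu, hxM⟩ := hB.2.2 f₁ h1B h1b
    exact not_free_of_mem hxM (Sym2.mem_mk_right x f₁) hfree1
  exact (key G M hM B b hB hfree2 P.length f₁ P rfl hpath halt hhead).1 hA
end

section
/- Let B ⊆ V be internally near-matched for M with base vertex b, let P be an augmenting path, and let S be a maximal subpath of P all of whose edges lie in γ(B). If b is an endpoint of S, then S has even length; equivalently, S contains equally many matched and unmatched edges. -/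
open SimpleGraph

attribute [local instance] Classical.propDecidable

variable {V : Type*}

lemma edges_getElem_walk {G : SimpleGraph V} {u v : V} (P : G.Walk u v) :
    ∀ (k : ℕ) (h : k < P.length),
      P.edges[k]'(by rwa [SimpleGraph.Walk.length_edges]) =
        s(P.getVert k, P.getVert (k+1)) := by
  induction P with
  | nil => intro k h; simp at h
  | cons hadj q ih =>
    intro k h
    cases k with
    | zero =>
      simp [SimpleGraph.Walk.edges_cons, SimpleGraph.Walk.getVert_cons_succ,
        SimpleGraph.Walk.getVert_zero]
    | succ k =>
      simpa [SimpleGraph.Walk.edges_cons, SimpleGraph.Walk.getVert_cons_succ]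
        using ih k (by simpa [SimpleGraph.Walk.length_cons, Nat.succ_lt_succ_iff] using h)

lemma support_getElem_walk {G : SimpleGraph V} {u v : V} (P : G.Walk u v) :
    ∀ (k : ℕ) (h : k ≤ P.length),
      P.support[k]'(by rw [SimpleGraph.Walk.length_support]; omega) = P.getVert k := by
  induction P with
  | nil => intro k h; simp only [SimpleGraph.Walk.length_nil, Nat.le_zero] at h; subst h; simp
  | cons hadj q ih =>
    intro k h
    cases k with
    | zero => simp
    | succ k =>
      simpa [SimpleGraph.Walk.support_cons, SimpleGraph.Walk.getVert_cons_succ]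
        using ih k (by simpa [SimpleGraph.Walk.length_cons, Nat.succ_le_succ_iff] using h)

lemma getVert_injective_walk {G : SimpleGraph V} {u v : V} {P : G.Walk u v}
    (hP : P.IsPath) {j k : ℕ} (hj : j ≤ P.length) (hk : k ≤ P.length)
    (h : P.getVert j = P.getVert k) : j = k := by
  have hnd := hP.support_nodup
  have hj' : j < P.support.length := by rw [SimpleGraph.Walk.length_support]; omega
  have hk' : k < P.support.length := by rw [SimpleGraph.Walk.length_support]; omega
  rw [← support_getElem_walk P j hj, ← support_getElem_walk P k hk] at h
  exact (List.Nodup.getElem_inj_iff hnd).mp h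

lemma alt_filter_len {α : Type*} (p : α → Prop) [DecidablePred p] :
    ∀ L : List α, List.Chain' (fun a c => ¬(p a ↔ p c)) L → Even L.length →
      (L.filter (fun x => p x)).length = (L.filter (fun x => ¬ p x)).length
  | [], _, _ => rfl
  | [a], _, h => by simp [Nat.even_iff] at h
  | a :: c :: t, hc, he => by
    have h1 : ¬ (p a ↔ p c) := (List.isChain_cons_cons.mp hc).1
    have h2 : List.Chain' (fun a c => ¬(p a ↔ p c)) t :=
      (List.isChain_cons_cons.mp hc).2.tail
    have he' : Even t.length := by
      simp only [List.length_cons, Nat.even_iff] at he ⊢; omega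
    have ih := alt_filter_len p t h2 he'
    by_cases hpa : p a <;> by_cases hpc : p c <;>
      simp_all [List.filter_cons]

theorem maximal_subpath_in_blossom_at_base_even
    {V : Type*} (G : SimpleGraph V) (M : Finset (Sym2 V))
    (B : Finset V) (b : V)
    (hM : IsMatchingSet G M)
    (hB : InternallyNearMatched M B b)
    {f₁ f₂ : V} (P : G.Walk f₁ f₂) (hP : IsAugmenting M P)
    (i n : ℕ) (hn : 1 ≤ n) (hin : i + n ≤ P.edges.length)
    (hsub : ∀ e ∈ (P.edges.drop i).take n, ∀ x ∈ e, x ∈ B)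
    (hmaxl : i = 0 ∨ ∃ h : i - 1 < P.edges.length, ¬ ∀ x ∈ P.edges[i-1]'h, x ∈ B)
    (hmaxr : i + n = P.edges.length ∨
      ∃ h : i + n < P.edges.length, ¬ ∀ x ∈ P.edges[i+n]'h, x ∈ B)
    (hend : b = P.getVert i ∨ b = P.getVert (i + n)) :
    Even n ∧
      (((P.edges.drop i).take n).filter fun e => e ∈ M).length =
        (((P.edges.drop i).take n).filter fun e => e ∉ M).length := by
  obtain ⟨hpath, hne, hfree1, hfree2, halt⟩ := hP
  obtain ⟨hbB, hbNoM, hmatched⟩ := hB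
  have hlen : P.edges.length = P.length := SimpleGraph.Walk.length_edges P
  rw [hlen] at hin
  have hE : ∀ (k : ℕ) (h : k < P.length),
      P.edges[k]'(by rwa [hlen]) = s(P.getVert k, P.getVert (k+1)) := edges_getElem_walk P
  have halt' : ∀ k, k + 1 < P.length →
      ¬ (s(P.getVert k, P.getVert (k+1)) ∈ M ↔
          s(P.getVert (k+1), P.getVert (k+1+1)) ∈ M) := by
    intro k hk
    have h := List.isChain_iff_getElem.mp halt k (by rw [hlen]; omega)
    rw [hE k (by omega), hE (k+1) hk] at h
    exact h
  have hLlen : ((P.edges.drop i).take n).length = n := by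
    simp only [List.length_take, List.length_drop, hlen]; omega
  have hLk : ∀ (k : ℕ) (h : k < n),
      ((P.edges.drop i).take n)[k]'(by omega) =
        s(P.getVert (i+k), P.getVert (i+k+1)) := by
    intro k h
    rw [List.getElem_take, List.getElem_drop]
    exact hE (i+k) (by omega)
  have hsub' : ∀ k (h : k < n), ∀ x ∈ s(P.getVert (i+k), P.getVert (i+k+1)), x ∈ B := by
    intro k h
    have := hsub _ (List.getElem_mem (l := (P.edges.drop i).take n) (n := k) (by omega))
    rwa [hLk k h] at this
  have hvB : ∀ k, k ≤ n → P.getVert (i+k) ∈ B := by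
    intro k hk
    rcases Nat.lt_or_ge k n with h | h
    · exact hsub' k h _ (Sym2.mem_mk_left _ _)
    · have hk' : k = n := by omega
      have := hsub' (n-1) (by omega) (P.getVert (i+(n-1)+1)) (Sym2.mem_mk_right _ _)
      have he : i + (n-1) + 1 = i + n := by omega
      rw [he] at this
      rwa [hk']
  have huniq : ∀ e ∈ M, ∀ f ∈ M, ∀ v : V, v ∈ e → v ∈ f → e = f := by
    intro e he f hf v hv hv'
    by_contra hne'
    exact hM.2 e he f hf hne' v hv hv'
  have hbNoM' : ∀ v ∈ B, s(v, b) ∉ M := by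
    intro v hv
    rw [Sym2.eq_swap]
    exact hbNoM v hv
  -- Main parity claim: Even n
  have heven : Even n := by
    rcases hend with hb | hb
    · -- b at the left end
      have step0 : s(P.getVert i, P.getVert (i+1)) ∉ M := by
        rw [← hb]
        exact hbNoM _ (by simpa using hvB 1 hn)
      have parity : ∀ k, k < n → (s(P.getVert (i+k), P.getVert (i+k+1)) ∈ M ↔ k % 2 = 1) := by
        intro k
        induction k with
        | zero => intro _; simpa using step0
        | succ k ih =>
          intro h
          have hk := ih (by omega)
          have ha := halt' (i+k) (by omega)
          have he1 : i + (k+1) = i + k + 1 := by omega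
          rw [he1]
          constructor
          · intro hm
            by_contra hodd
            have : k % 2 = 1 := by omega
            exact ha ⟨fun _ => hm, fun _ => hk.mpr this⟩
          · intro hodd
            by_contra hm
            have hk0 : ¬ k % 2 = 1 := by omega
            have : s(P.getVert (i+k), P.getVert (i+k+1)) ∉ M := fun hh => hk0 (hk.mp hh)
            exact ha ⟨fun hh => absurd hh this, fun hh => absurd hh hm⟩
      -- the right end vertex is matched inside B
      have hvn : P.getVert (i+n) ∈ B := hvB n le_rfl
      have hvnb : P.getVert (i+n) ≠ b := by
        rw [hb]
        intro h
        have := getVert_injective_walk hpath (by omega : i + n ≤ P.length)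
          (by omega : i ≤ P.length) h
        omega
      obtain ⟨u, huB, hune, huM⟩ := hmatched _ hvn hvnb
      have hlast : s(P.getVert (i+n-1), P.getVert (i+n-1+1)) ∈ M := by
        by_contra hnot
        have he1 : i + n - 1 + 1 = i + n := by omega
        rw [he1] at hnot
        rcases hmaxr with h | ⟨h, hx⟩
        · have hPf : P.getVert (i+n) = f₂ := by
            have hh : i + n = P.length := by omega
            rw [hh]; exact SimpleGraph.Walk.getVert_length P
          rw [hPf] at huM
          exact hfree2 _ huM (Sym2.mem_mk_right _ _)
        · rw [hlen] at h
          have ha := halt' (i+n-1) (by omega)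
          rw [he1] at ha
          have hMn : s(P.getVert (i+n), P.getVert (i+n+1)) ∈ M := by
            by_contra hMn
            exact ha (iff_of_false hnot hMn)
          have heq := huniq _ hMn _ huM (P.getVert (i+n))
            (Sym2.mem_mk_left _ _) (Sym2.mem_mk_right _ _)
          apply hx
          intro x hxmem
          rw [hE (i+n) h, heq] at hxmem
          rcases Sym2.mem_iff.mp hxmem with rfl | rfl
          · exact huB
          · exact hvn
      have he1 : i + n - 1 = i + (n-1) := by omega
      rw [he1] at hlast
      have := (parity (n-1) (by omega)).mp hlast
      rw [Nat.even_iff]; omega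
    · -- b at the right end
      have hlaste : s(P.getVert (i+n-1), P.getVert (i+n-1+1)) ∉ M := by
        have he1 : i + n - 1 + 1 = i + n := by omega
        rw [he1, ← hb]
        exact hbNoM' _ (by
          have := hvB (n-1) (by omega)
          have he2 : i + (n-1) = i + n - 1 := by omega
          rwa [he2] at this)
      have hv0 : P.getVert i ∈ B := by simpa using hvB 0 (by omega)
      have hv0b : P.getVert i ≠ b := by
        rw [hb]
        intro h
        have := getVert_injective_walk hpath (by omega : i ≤ P.length)
          (by omega : i + n ≤ P.length) h
        omega
      obtain ⟨u, huB, hune, huM⟩ := hmatched _ hv0 hv0b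
      have hfirst : s(P.getVert i, P.getVert (i+1)) ∈ M := by
        by_contra hnot
        rcases hmaxl with h0 | ⟨h, hx⟩
        · have hPf : P.getVert i = f₁ := by
            rw [h0]; exact SimpleGraph.Walk.getVert_zero P
          rw [hPf] at huM
          exact hfree1 _ huM (Sym2.mem_mk_right _ _)
        · by_cases hi0 : i = 0
          · subst hi0
            apply hx
            intro x hxmem
            have hg : P.edges[(0:ℕ)-1]'h = s(P.getVert 0, P.getVert 1) := hE 0 (by omega)
            rw [hg] at hxmem
            exact hsub' 0 hn x hxmem
          · rw [hlen] at h
            have ha := halt' (i-1) (by omega)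
            have he1 : i - 1 + 1 = i := by omega
            rw [he1] at ha
            have hMp : s(P.getVert (i-1), P.getVert i) ∈ M := by
              by_contra hMp
              exact ha (iff_of_false hMp hnot)
            have heq := huniq _ hMp _ huM (P.getVert i)
              (Sym2.mem_mk_right _ _) (Sym2.mem_mk_right _ _)
            apply hx
            intro x hxmem
            have hg : P.edges[i-1]'(by omega) = s(P.getVert (i-1), P.getVert (i-1+1)) := hE (i-1) (by omega)
            rw [he1] at hg
            rw [hg, heq] at hxmem
            rcases Sym2.mem_iff.mp hxmem with rfl | rfl
            · exact huB
            · exact hv0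
      have parity : ∀ k, k < n → (s(P.getVert (i+k), P.getVert (i+k+1)) ∈ M ↔ k % 2 = 0) := by
        intro k
        induction k with
        | zero => intro _; simpa using hfirst
        | succ k ih =>
          intro h
          have hk := ih (by omega)
          have ha := halt' (i+k) (by omega)
          have he1 : i + (k+1) = i + k + 1 := by omega
          rw [he1]
          constructor
          · intro hm
            by_contra hev
            have : k % 2 = 0 := by omega
            exact ha ⟨fun _ => hm, fun _ => hk.mpr this⟩
          · intro hev
            by_contra hm
            have hk0 : ¬ k % 2 = 0 := by omega
            have : s(P.getVert (i+k), P.getVert (i+k+1)) ∉ M := fun hh => hk0 (hk.mp hh)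
            exact ha ⟨fun hh => absurd hh this, fun hh => absurd hh hm⟩
      have he1 : i + n - 1 = i + (n-1) := by omega
      rw [he1] at hlaste
      have : ¬ (n-1) % 2 = 0 := fun hh => hlaste ((parity (n-1) (by omega)).mpr hh)
      rw [Nat.even_iff]; omega
  refine ⟨heven, ?_⟩
  have hLchain : List.Chain' (fun e f => ¬((e ∈ M) ↔ (f ∈ M))) ((P.edges.drop i).take n) := by
    refine List.isChain_iff_getElem.mpr ?_
    intro k hk
    rw [hLlen] at hk
    rw [hLk k (by omega), hLk (k+1) (by omega)]
    have he1 : i + (k+1) = i + k + 1 := by omega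
    rw [he1]
    exact halt' (i+k) (by omega)
  exact alt_filter_len (fun e => e ∈ M) _ hLchain (by rw [hLlen]; exact heven)
end

section
/- Let B ⊆ V be internally near-matched for M with base vertex b, let P be an augmenting path, and let S be a maximal subpath of P all of whose edges lie in γ(B). If b is not an endpoint of S, then the first and last edges of S are matched; consequently S contains exactly one more matched edge than unmatched edges. -/
open SimpleGraph

attribute [local instance] Classical.propDecidable

variable {V : Type*}

lemma walk_edges_getElem {G : SimpleGraph V} :
    ∀ {u v : V} (P : G.Walk u v) (j : ℕ) (h : j < P.edges.length),
      P.edges[j] = s(P.getVert j, P.getVert (j+1))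
  | _, _, .nil, j, h => by simp at h
  | u, v, .cons hadj p, 0, h => by
      simp [Walk.edges_cons, Walk.getVert_zero, Walk.getVert_cons_succ]
  | u, v, .cons hadj p, (j+1), h => by
      have h' : j < p.edges.length := by simpa [Walk.edges_cons] using h
      have := walk_edges_getElem p j h'
      simp [Walk.edges_cons, Walk.getVert_cons_succ, this]

lemma alt_filter_count (M : Finset (Sym2 V)) :
    ∀ (L : List (Sym2 V)), List.Chain' (fun e f => ¬(e ∈ M ↔ f ∈ M)) L →
    ∀ (h : L ≠ []), L.head h ∈ M → L.getLast h ∈ M →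
    (L.filter fun e => e ∈ M).length = (L.filter fun e => e ∉ M).length + 1
  | [], _, h, _, _ => absurd rfl h
  | [a], _, _, ha, _ => by
      simp only [List.head_cons] at ha
      simp [List.filter, ha]
  | a :: b :: rest, hc, _, ha, hl => by
      simp only [List.head_cons] at ha
      have hab : ¬(a ∈ M ↔ b ∈ M) := (List.isChain_cons_cons.mp hc).1
      have hc2 := (List.isChain_cons_cons.mp hc).2
      have hb : b ∉ M := fun hbM => hab ⟨fun _ => hbM, fun _ => ha⟩
      match rest with
      | [] =>
        exact absurd (by simpa using hl) hb
      | c :: rest' =>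
        have hbc : ¬(b ∈ M ↔ c ∈ M) := (List.isChain_cons_cons.mp hc2).1
        have hcM : c ∈ M := by tauto
        have hlast : (a :: b :: c :: rest').getLast (by simp) = (c :: rest').getLast (by simp) := by
          simp [List.getLast]
        have ih := alt_filter_count M (c :: rest') (List.isChain_cons_cons.mp hc2).2 (by simp) (by simpa using hcM) (hlast ▸ hl)
        simp only [List.filter_cons, ha, hb, hcM, decide_eq_true_eq] at ih ⊢
        simp_all

theorem maximal_subpath_in_blossom_avoiding_base
    {V : Type*} (G : SimpleGraph V) (M : Finset (Sym2 V))
    (B : Finset V) (b : V)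
    (hM : IsMatchingSet G M)
    (hB : InternallyNearMatched M B b)
    {f₁ f₂ : V} (P : G.Walk f₁ f₂) (hP : IsAugmenting M P)
    (i n : ℕ) (hn : 1 ≤ n) (hin : i + n ≤ P.edges.length)
    (hsub : ∀ e ∈ (P.edges.drop i).take n, ∀ x ∈ e, x ∈ B)
    (hmaxl : i = 0 ∨ ∃ h : i - 1 < P.edges.length, ¬ ∀ x ∈ P.edges[i-1]'h, x ∈ B)
    (hmaxr : i + n = P.edges.length ∨
      ∃ h : i + n < P.edges.length, ¬ ∀ x ∈ P.edges[i+n]'h, x ∈ B)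
    (hend : b ≠ P.getVert i ∧ b ≠ P.getVert (i + n)) :
    (∀ h : (P.edges.drop i).take n ≠ [],
      ((P.edges.drop i).take n).head h ∈ M ∧
        ((P.edges.drop i).take n).getLast h ∈ M) ∧
      (((P.edges.drop i).take n).filter fun e => e ∈ M).length =
        (((P.edges.drop i).take n).filter fun e => e ∉ M).length + 1 := by
  obtain ⟨hBb, hBbase, hBmatch⟩ := hB
  obtain ⟨hpath, hne, hfree₁, hfree₂, halt⟩ := hP
  set L := (P.edges.drop i).take n with hLdef
  have hLlen : L.length = n := by
    simp only [hLdef, List.length_take, List.length_drop]; omega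
  have hLget : ∀ k, (hk : k < n) → L[k]'(by omega) = P.edges[i+k]'(by omega) := by
    intro k hk
    simp [hLdef, List.getElem_take, List.getElem_drop]
  -- membership in L from index
  have hLmem : ∀ k, (hk : k < n) → (P.edges[i+k]'(by omega)) ∈ L := by
    intro k hk
    rw [← hLget k hk]; exact List.getElem_mem _
  have hedge : ∀ j, (h : j < P.edges.length) →
      P.edges[j] = s(P.getVert j, P.getVert (j+1)) := fun j h => walk_edges_getElem P j h
  -- matched edge uniqueness
  have huniq : ∀ e ∈ M, ∀ f ∈ M, ∀ v : V, v ∈ e → v ∈ f → e = f := by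
    intro e he f hf v hve hvf
    by_contra hnef
    exact hM.2 e he f hf hnef v hve hvf
  have hmatched : ∀ v ∈ B, v ≠ b → ∃ u ∈ B, s(u, v) ∈ M := by
    intro v hv hvb
    obtain ⟨u, huB, _, huM⟩ := hBmatch v hv hvb
    exact ⟨u, huB, huM⟩
  -- endpoints of S are in B
  have hgiB : P.getVert i ∈ B := by
    have h0 : i + 0 < P.edges.length := by omega
    have := hsub _ (hLmem 0 hn)
    have := this (P.getVert i)
    rw [hedge (i+0) h0] at this
    simpa using this (by simp)
  have hgnB : P.getVert (i + n) ∈ B := by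
    have hk : n - 1 < n := by omega
    have h0 : i + (n-1) < P.edges.length := by omega
    have := hsub _ (hLmem (n-1) hk) (P.getVert (i + n))
    rw [hedge (i+(n-1)) h0] at this
    have heq : i + (n-1) + 1 = i + n := by omega
    rw [heq] at this
    simpa using this (by simp)
  -- alternation in index form
  have haidx : ∀ j, (h : j + 1 < P.edges.length) →
      ¬((P.edges[j]'(by omega)) ∈ M ↔ P.edges[j+1] ∈ M) := by
    intro j h
    have := List.isChain_iff_getElem.mp halt j (by omega)
    simpa using this
  -- i ≠ 0
  have hi0 : i ≠ 0 := by
    intro h0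
    obtain ⟨u, _, huM⟩ := hmatched _ hgiB (Ne.symm hend.1)
    apply hfree₁ _ huM
    have : P.getVert i = f₁ := by rw [h0]; exact P.getVert_zero
    rw [this] at huM
    simp only [Sym2.mem_iff]
    exact Or.inr this.symm
  -- i + n ≠ length
  have hr0 : i + n ≠ P.edges.length := by
    intro h0
    obtain ⟨u, _, huM⟩ := hmatched _ hgnB (Ne.symm hend.2)
    apply hfree₂ _ huM
    have : P.getVert (i + n) = f₂ := by
      rw [h0, P.length_edges]; exact P.getVert_length
    rw [this] at huM
    simp only [Sym2.mem_iff]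
    exact Or.inr this.symm
  -- first edge matched
  have hfirst : (P.edges[i]'(by omega)) ∈ M := by
    obtain ⟨x, hxB, huM⟩ := hmatched _ hgiB (Ne.symm hend.1)
    rcases hmaxl with h0 | ⟨hlt, hnB⟩
    · exact absurd h0 hi0
    push_neg at hnB
    obtain ⟨y, hy, hyB⟩ := hnB
    have hprev : ¬ (P.edges[i-1]'hlt) ∈ M := by
      intro hinM
      have heq := huniq _ hinM _ huM (P.getVert i) ?_ (by simp)
      · rw [hedge (i-1) hlt] at heq hy
        have hii : i - 1 + 1 = i := by omega
        rw [hii] at heq hy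
        rw [heq] at hy
        rcases Sym2.mem_iff.mp hy with h | h
        · exact hyB (h ▸ hxB)
        · exact hyB (h ▸ hgiB)
      · rw [hedge (i-1) hlt]
        have hii : i - 1 + 1 = i := by omega
        rw [hii]; simp
    have := haidx (i-1) (by omega)
    have heq2 : P.edges[i-1+1]'(by omega) = P.edges[i]'(by omega) := by congr 1; omega
    rw [heq2] at this
    tauto
  -- last edge matched
  have hlastM : (P.edges[i+n-1]'(by omega)) ∈ M := by
    obtain ⟨x, hxB, huM⟩ := hmatched _ hgnB (Ne.symm hend.2)
    rcases hmaxr with h0 | ⟨hlt, hnB⟩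
    · exact absurd h0 hr0
    push_neg at hnB
    obtain ⟨y, hy, hyB⟩ := hnB
    have hnext : ¬ (P.edges[i+n]'hlt) ∈ M := by
      intro hinM
      have heq := huniq _ hinM _ huM (P.getVert (i+n)) ?_ (by simp)
      · rw [hedge (i+n) hlt] at heq hy
        rw [heq] at hy
        rcases Sym2.mem_iff.mp hy with h | h
        · exact hyB (h ▸ hxB)
        · exact hyB (h ▸ hgnB)
      · rw [hedge (i+n) hlt]; simp
    have := haidx (i+n-1) (by omega)
    have heq2 : P.edges[i+n-1+1]'(by omega) = P.edges[i+n]'(by omega) := by congr 1; omega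
    rw [heq2] at this
    tauto
  have hLne : L ≠ [] := by
    intro h; rw [h] at hLlen; simp at hLlen; omega
  have hhead : L.head hLne ∈ M := by
    have : L.head hLne = L[0]'(by omega) := by
      rw [List.head_eq_getElem]
    rw [this, hLget 0 hn]
    simpa using hfirst
  have hlast : L.getLast hLne ∈ M := by
    have : L.getLast hLne = L[L.length - 1]'(by omega) := List.getLast_eq_getElem _
    rw [this]
    have : L[L.length - 1]'(by omega) = L[n-1]'(by omega) := by
      congr 1; omega
    rw [this, hLget (n-1) (by omega)]
    have : i + (n - 1) = i + n - 1 := by omega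
    simp_rw [this]
    exact hlastM
  have hchainL : List.Chain' (fun e f => ¬(e ∈ M ↔ f ∈ M)) L :=
    (halt.drop i).take n
  refine ⟨fun h => ⟨hhead, hlast⟩, ?_⟩
  exact alt_filter_count M L hchainL hLne hhead hlast
end

section
/- Suppose every edge of G is dominated and every edge of M is tight (with respect to y, 𝓑 and z). Then an augmenting path P with free endpoints f₁ and f₂ satisfies w(P) = y(f₁) + y(f₂) if and only if every edge of P is tight and, for every B ∈ 𝓑 with z(B) > 0, the set of edges of P lying in γ(B) is either empty or forms a single even-length alternating path having the base vertex of B as an endpoint. -/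
open SimpleGraph

attribute [local instance] Classical.propDecidable

variable {V : Type*}

/-- The edges of `P` lying in `γ(B)` are either empty or form a single (contiguous)
even-length alternating subpath of `P` having the base vertex `b` as an endpoint. -/
def GammaEdgesSingleEvenAltAtBase (M : Finset (Sym2 V)) {G : SimpleGraph V} {f₁ f₂ : V}
    (P : G.Walk f₁ f₂) (B : Finset V) (b : V) : Prop :=
  (∀ e ∈ P.edges, ¬ ∀ x ∈ e, x ∈ B) ∨
    ∃ i n : ℕ, 0 < n ∧ Even n ∧ i + n ≤ P.edges.length ∧
      (∀ (j : ℕ) (hj : j < P.edges.length),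
        (∀ x ∈ P.edges[j]'hj, x ∈ B) ↔ i ≤ j ∧ j < i + n) ∧
      List.Chain' (fun e f => ¬(e ∈ M ↔ f ∈ M)) ((P.edges.drop i).take n) ∧
      (b = P.getVert i ∨ b = P.getVert (i + n))


private lemma aux_sum_Ico_neg_one_pow {R : Type*} [Ring R] (i n : ℕ) :
    ∑ j ∈ Finset.Ico i (i + n), ((-1 : R)) ^ j
      = if Even n then 0 else (-1 : R) ^ i := by
  induction n with
  | zero => simp
  | succ n ih =>
    rw [show i + (n + 1) = (i + n) + 1 from rfl, Finset.sum_Ico_succ_top (by omega), ih]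
    rcases Nat.even_or_odd n with h | h
    · rw [if_pos h, if_neg (by simpa [Nat.even_add_one] using h)]
      rw [pow_add, h.neg_one_pow]
      simp
    · rw [if_neg (by simpa [Nat.not_even_iff_odd] using h),
        if_pos (by simpa [Nat.even_add_one, Nat.not_even_iff_odd] using h)]
      rw [pow_add, h.neg_one_pow]
      simp


private lemma aux_core_le (k : ℕ) (T Bse : ℕ → Prop)
    (S : Finset ℕ)
    (hmem : ∀ j, j ∈ S ↔ j < k ∧ T j ∧ T (j + 1))
    (huniq : ∀ i j, Bse i → Bse j → i = j)
    (hH1 : ∀ j, j ≤ k → Odd j → T j → ¬ Bse j → j < k ∧ T (j + 1))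
    (hH2 : ∀ j, j ≤ k → Even j → T j → ¬ Bse j → 0 < j ∧ T (j - 1)) :
    ∑ j ∈ S, ((-1 : ℤ)) ^ j ≤ 0 := by
  classical
  set Ev := S.filter (fun j => Even j) with hEv
  set Od := S.filter (fun j => Odd j) with hOd
  have hOdeq : S.filter (fun j => ¬ Even j) = Od := by
    rw [hOd]; exact Finset.filter_congr (fun x _ => by rw [Nat.not_even_iff_odd])
  have hsplit : ∑ j ∈ S, ((-1 : ℤ)) ^ j = (Ev.card : ℤ) - (Od.card : ℤ) := by
    rw [← Finset.sum_filter_add_sum_filter_not S (fun j => Even j)]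
    have h1 : ∑ j ∈ Ev, ((-1 : ℤ)) ^ j = (Ev.card : ℤ) := by
      rw [Finset.sum_congr rfl (fun j hj => (Finset.mem_filter.mp hj).2.neg_one_pow)]
      simp
    have h2 : ∑ j ∈ Od, ((-1 : ℤ)) ^ j = -(Od.card : ℤ) := by
      rw [Finset.sum_congr rfl
        (fun j hj => ((Finset.mem_filter.mp hj).2).neg_one_pow)]
      simp
    rw [← hEv, hOdeq, h1, h2]; ring
  set Q : ℕ → Prop := fun x => ∃ i, i ≤ x ∧ Bse i with hQ
  set φ : ℕ → ℕ := fun j => if Q j then j + 1 else j - 1 with hφ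
  have hQmono : ∀ x y, x ≤ y → Q x → Q y := by
    rintro x y hxy ⟨i, hi, hb⟩; exact ⟨i, le_trans hi hxy, hb⟩
  have hposn : ∀ j ∈ Ev, ¬ Q j → 0 < j := by
    intro j hj hq
    obtain ⟨hjS, hje⟩ := Finset.mem_filter.mp hj
    obtain ⟨hjk, hT1, hT2⟩ := (hmem j).mp hjS
    exact (hH2 j (by omega) hje hT1 (fun h => hq ⟨j, le_refl j, h⟩)).1
  have hmaps : ∀ j ∈ Ev, φ j ∈ Od := by
    intro j hj
    obtain ⟨hjS, hje⟩ := Finset.mem_filter.mp hj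
    obtain ⟨hjk, hT1, hT2⟩ := (hmem j).mp hjS
    by_cases hq : Q j
    · rw [hφ]; simp only [if_pos hq]
      have hb : ¬ Bse (j + 1) := by
        rintro hb; obtain ⟨i, hi, hbi⟩ := hq
        have := huniq i (j + 1) hbi hb; omega
      obtain ⟨h1, h2⟩ := hH1 (j + 1) (by omega) (hje.add_one) hT2 hb
      refine Finset.mem_filter.mpr ⟨(hmem _).mpr ⟨h1, hT2, h2⟩, ?_⟩
      exact hje.add_one
    · rw [hφ]; simp only [if_neg hq]
      have hb : ¬ Bse j := fun h => hq ⟨j, le_refl j, h⟩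
      obtain ⟨h0, h2⟩ := hH2 j (by omega) hje hT1 hb
      have hj1 : j - 1 + 1 = j := by omega
      refine Finset.mem_filter.mpr ⟨(hmem _).mpr ⟨by omega, h2, by rw [hj1]; exact hT1⟩, ?_⟩
      rw [Nat.odd_iff]; rw [Nat.even_iff] at hje; omega
  have hinj : Set.InjOn φ Ev := by
    intro j hj j' hj' heq
    rw [hφ] at heq
    have h0 : ¬ Q j → 0 < j := hposn j hj
    have h0' : ¬ Q j' → 0 < j' := hposn j' hj'
    by_cases hq : Q j <;> by_cases hq' : Q j'
    · simp only [if_pos hq, if_pos hq'] at heq; omega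
    · simp only [if_pos hq, if_neg hq'] at heq
      exfalso; exact hq' (hQmono j j' (by omega) hq)
    · simp only [if_neg hq, if_pos hq'] at heq
      exfalso; exact hq (hQmono j' j (by omega) hq')
    · simp only [if_neg hq, if_neg hq'] at heq
      have := h0 hq; have := h0' hq'; omega
  have hcard : Ev.card ≤ Od.card := Finset.card_le_card_of_injOn φ hmaps hinj
  rw [hsplit]; omega
private lemma aux_core_eq (k : ℕ) (T Bse : ℕ → Prop)
    (S : Finset ℕ)
    (hmem : ∀ j, j ∈ S ↔ j < k ∧ T j ∧ T (j + 1))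
    (huniq : ∀ i j, Bse i → Bse j → i = j)
    (hH1 : ∀ j, j ≤ k → Odd j → T j → ¬ Bse j → j < k ∧ T (j + 1))
    (hH2 : ∀ j, j ≤ k → Even j → T j → ¬ Bse j → 0 < j ∧ T (j - 1))
    (hzero : ∑ j ∈ S, ((-1 : ℤ)) ^ j = 0) :
    (∀ j, j < k → ¬ (T j ∧ T (j + 1))) ∨
      ∃ i n : ℕ, 0 < n ∧ Even n ∧ i + n ≤ k ∧
        (∀ j, j < k → ((T j ∧ T (j + 1)) ↔ (i ≤ j ∧ j < i + n))) ∧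
        (Bse i ∨ Bse (i + n)) := by
  classical
  by_cases hSe : S = ∅
  · left; intro j hj hT
    exact Finset.notMem_empty j (hSe ▸ (hmem j).mpr ⟨hj, hT⟩)
  right
  set Ev := S.filter (fun j => Even j) with hEv
  set Od := S.filter (fun j => Odd j) with hOd
  have hOdeq : S.filter (fun j => ¬ Even j) = Od := by
    rw [hOd]; exact Finset.filter_congr (fun x _ => by rw [Nat.not_even_iff_odd])
  have hsplit : ∑ j ∈ S, ((-1 : ℤ)) ^ j = (Ev.card : ℤ) - (Od.card : ℤ) := by
    rw [← Finset.sum_filter_add_sum_filter_not S (fun j => Even j)]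
    have h1 : ∑ j ∈ Ev, ((-1 : ℤ)) ^ j = (Ev.card : ℤ) := by
      rw [Finset.sum_congr rfl (fun j hj => (Finset.mem_filter.mp hj).2.neg_one_pow)]
      simp
    have h2 : ∑ j ∈ Od, ((-1 : ℤ)) ^ j = -(Od.card : ℤ) := by
      rw [Finset.sum_congr rfl
        (fun j hj => ((Finset.mem_filter.mp hj).2).neg_one_pow)]
      simp
    rw [← hEv, hOdeq, h1, h2]; ring
  set Q : ℕ → Prop := fun x => ∃ i, i ≤ x ∧ Bse i with hQ
  set φ : ℕ → ℕ := fun j => if Q j then j + 1 else j - 1 with hφ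
  have hQmono : ∀ x y, x ≤ y → Q x → Q y := by
    rintro x y hxy ⟨i, hi, hb⟩; exact ⟨i, le_trans hi hxy, hb⟩
  have hposn : ∀ j ∈ Ev, ¬ Q j → 0 < j := by
    intro j hj hq
    obtain ⟨hjS, hje⟩ := Finset.mem_filter.mp hj
    obtain ⟨hjk, hT1, hT2⟩ := (hmem j).mp hjS
    exact (hH2 j (by omega) hje hT1 (fun h => hq ⟨j, le_refl j, h⟩)).1
  have hmaps : ∀ j ∈ Ev, φ j ∈ Od := by
    intro j hj
    obtain ⟨hjS, hje⟩ := Finset.mem_filter.mp hj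
    obtain ⟨hjk, hT1, hT2⟩ := (hmem j).mp hjS
    by_cases hq : Q j
    · rw [hφ]; simp only [if_pos hq]
      have hb : ¬ Bse (j + 1) := by
        rintro hb; obtain ⟨i, hi, hbi⟩ := hq
        have := huniq i (j + 1) hbi hb; omega
      obtain ⟨h1, h2⟩ := hH1 (j + 1) (by omega) (hje.add_one) hT2 hb
      exact Finset.mem_filter.mpr ⟨(hmem _).mpr ⟨h1, hT2, h2⟩, hje.add_one⟩
    · rw [hφ]; simp only [if_neg hq]
      have hb : ¬ Bse j := fun h => hq ⟨j, le_refl j, h⟩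
      obtain ⟨h0, h2⟩ := hH2 j (by omega) hje hT1 hb
      have hj1 : j - 1 + 1 = j := by omega
      refine Finset.mem_filter.mpr ⟨(hmem _).mpr ⟨by omega, h2, by rw [hj1]; exact hT1⟩, ?_⟩
      rw [Nat.odd_iff]; rw [Nat.even_iff] at hje; omega
  have hinj : Set.InjOn φ Ev := by
    intro j hj j' hj' heq
    rw [hφ] at heq
    have h0 : ¬ Q j → 0 < j := hposn j hj
    have h0' : ¬ Q j' → 0 < j' := hposn j' hj'
    by_cases hq : Q j <;> by_cases hq' : Q j'
    · simp only [if_pos hq, if_pos hq'] at heq; omega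
    · simp only [if_pos hq, if_neg hq'] at heq
      exfalso; exact hq' (hQmono j j' (by omega) hq)
    · simp only [if_neg hq, if_pos hq'] at heq
      exfalso; exact hq (hQmono j' j (by omega) hq')
    · simp only [if_neg hq, if_neg hq'] at heq
      have := h0 hq; have := h0' hq'; omega
  -- equal cardinalities and surjectivity
  have hcardeq : Ev.card = Od.card := by
    have : ((Ev.card : ℤ) - (Od.card : ℤ)) = 0 := by rw [← hsplit]; exact hzero
    omega
  have himg : Finset.image φ Ev = Od := by
    apply Finset.eq_of_subset_of_card_le
    · intro x hx; obtain ⟨j, hj, rfl⟩ := Finset.mem_image.mp hx; exact hmaps j hj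
    · rw [Finset.card_image_of_injOn hinj]; omega
  have hsurj : ∀ j ∈ Od, ∃ j' ∈ Ev, φ j' = j := by
    intro j hj; exact Finset.mem_image.mp (himg ▸ hj)
  have hne : S.Nonempty := Finset.nonempty_of_ne_empty hSe
  set i := S.min' hne with hi
  set m := S.max' hne with hm
  have hiS : i ∈ S := S.min'_mem hne
  have hmS : m ∈ S := S.max'_mem hne
  have him : i ≤ m := S.min'_le m hmS
  have hmk : m < k := ((hmem m).mp hmS).1
  have hik : i < k := ((hmem i).mp hiS).1
  have hminle : ∀ x ∈ S, i ≤ x := fun x hx => S.min'_le x hx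
  have hmaxle : ∀ x ∈ S, x ≤ m := fun x hx => S.le_max' x hx
  -- F1 : structure of odd elements of S from surjectivity
  have hF1 : ∀ j ∈ S, Odd j →
      (j - 1 ∈ S ∧ Q (j - 1) ∧ 0 < j) ∨ (j + 1 ∈ S ∧ ¬ Q (j + 1)) := by
    intro j hj hjo
    have hjOd : j ∈ Od := Finset.mem_filter.mpr ⟨hj, hjo⟩
    obtain ⟨j', hj', hφj⟩ := hsurj j hjOd
    have hj'Ev := Finset.mem_filter.mp hj'
    have hφj : (if Q j' then j' + 1 else j' - 1) = j := hφj
    by_cases hq : Q j'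
    · rw [if_pos hq] at hφj
      left
      have : j - 1 = j' := by omega
      rw [this]
      exact ⟨hj'Ev.1, hq, by omega⟩
    · rw [if_neg hq] at hφj
      have h0 : 0 < j' := hposn j' hj' hq
      have : j + 1 = j' := by omega
      rw [this]
      exact Or.inr ⟨hj'Ev.1, hq⟩
  -- even max gives base at m + 1
  have hmaxeven : Even m → Bse (m + 1) := by
    intro hme
    by_contra hb
    obtain ⟨hT1, hT2⟩ := ((hmem m).mp hmS).2
    obtain ⟨h1, h2⟩ := hH1 (m + 1) (by omega) (hme.add_one) hT2 hb
    have : m + 1 ∈ S := (hmem _).mpr ⟨h1, hT2, h2⟩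
    have := hmaxle _ this; omega
  -- base exists
  obtain ⟨β, hβ⟩ : ∃ β, Bse β := by
    rcases Nat.even_or_odd m with hme | hmo
    · exact ⟨m + 1, hmaxeven hme⟩
    · rcases hF1 m hmS hmo with ⟨_, ⟨b', _, hb'⟩, _⟩ | ⟨h1, _⟩
      · exact ⟨b', hb'⟩
      · have := hmaxle _ h1; omega
  have hQiff : ∀ x, Q x ↔ β ≤ x := by
    intro x
    constructor
    · rintro ⟨i', hi', hb⟩; have := huniq i' β hb hβ; omega
    · intro hx; exact ⟨β, hx, hβ⟩
  -- upward propagation below β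
  have hUP : ∀ j ∈ S, j + 1 < β → j + 1 ∈ S := by
    intro j hj hlt
    obtain ⟨hjk, hT1, hT2⟩ := (hmem j).mp hj
    rcases Nat.even_or_odd j with hje | hjo
    · have hb : ¬ Bse (j + 1) := by
        intro hb; have := huniq (j+1) β hb hβ; omega
      obtain ⟨h1, h2⟩ := hH1 (j + 1) (by omega) (hje.add_one) hT2 hb
      exact (hmem _).mpr ⟨h1, hT2, h2⟩
    · rcases hF1 j hj hjo with ⟨_, hq, _⟩ | ⟨h1, _⟩
      · rw [hQiff] at hq; omega
      · exact h1
  -- downward propagation above β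
  have hDOWN : ∀ j ∈ S, β < j → j - 1 ∈ S := by
    intro j hj hlt
    obtain ⟨hjk, hT1, hT2⟩ := (hmem j).mp hj
    rcases Nat.even_or_odd j with hje | hjo
    · have hb : ¬ Bse j := by
        intro hb; have := huniq j β hb hβ; omega
      obtain ⟨h0, h2⟩ := hH2 j (by omega) hje hT1 hb
      refine (hmem _).mpr ⟨by omega, h2, ?_⟩
      rw [show j - 1 + 1 = j from by omega]; exact hT1
    · rcases hF1 j hj hjo with ⟨h1, _, _⟩ | ⟨_, hq⟩
      · exact h1
      · rw [hQiff] at hq; omega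
  -- interval
  have hup : ∀ d, i + d < β → i + d ∈ S := by
    intro d
    induction d with
    | zero => intro _; exact hiS
    | succ d ih =>
      intro h
      have h1 : i + d ∈ S := ih (by omega)
      exact hUP (i + d) h1 (by omega)
  have hdown : ∀ d, β ≤ m - d → m - d ∈ S := by
    intro d
    induction d with
    | zero => intro _; exact hmS
    | succ d ih =>
      intro h
      by_cases hd : m - (d + 1) = m - d
      · rw [hd]; exact ih (by omega)
      · have h1 : m - d ∈ S := ih (by omega)
        have := hDOWN (m - d) h1 (by omega)
        rw [show m - d - 1 = m - (d + 1) from by omega] at this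
        exact this
  have hIvl : ∀ x, i ≤ x → x ≤ m → x ∈ S := by
    intro x h1 h2
    rcases lt_or_ge x β with hx | hx
    · have := hup (x - i) (by omega)
      rw [show i + (x - i) = x from by omega] at this
      exact this
    · have := hdown (m - x) (by omega)
      rw [show m - (m - x) = x from by omega] at this
      exact this
  have hSeq : S = Finset.Ico i (m + 1) := by
    ext x
    rw [Finset.mem_Ico]
    constructor
    · intro hx; exact ⟨hminle x hx, by have := hmaxle x hx; omega⟩
    · rintro ⟨h1, h2⟩; exact hIvl x h1 (by omega)
  set n := m + 1 - i with hn
  have hin : i + n = m + 1 := by omega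
  have heven : Even n := by
    by_contra hne'
    rw [hSeq, ← hin] at hzero
    rw [aux_sum_Ico_neg_one_pow, if_neg hne'] at hzero
    rcases Nat.even_or_odd i with h | h
    · rw [h.neg_one_pow] at hzero; omega
    · rw [h.neg_one_pow] at hzero; omega
  refine ⟨i, n, by omega, heven, by omega, ?_, ?_⟩
  · intro j hj
    constructor
    · intro hT
      have := (hmem j).mpr ⟨hj, hT⟩
      exact ⟨hminle j this, by have := hmaxle j this; omega⟩
    · rintro ⟨h1, h2⟩
      exact ((hmem j).mp (hIvl j h1 (by omega))).2
  · rcases Nat.even_or_odd i with hie | hio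
    · left
      by_contra hb
      obtain ⟨hT1, hT2⟩ := ((hmem i).mp hiS).2
      obtain ⟨h0, h2⟩ := hH2 i (by omega) hie hT1 hb
      have : i - 1 ∈ S := by
        refine (hmem _).mpr ⟨by omega, h2, ?_⟩
        rw [show i - 1 + 1 = i from by omega]; exact hT1
      have := hminle _ this; omega
    · right
      have hme : Even m := by
        rcases heven with ⟨t, ht⟩
        rcases hio with ⟨t', ht'⟩
        exact ⟨t + t', by omega⟩
      rw [hin]
      exact hmaxeven hme
private lemma aux_edges_getElem {G : SimpleGraph V} :
    ∀ {u v : V} (p : G.Walk u v) (j : ℕ) (hj : j < p.edges.length),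
      p.edges[j] = s(p.getVert j, p.getVert (j + 1))
  | _, _, SimpleGraph.Walk.nil, j, hj => by simp at hj
  | _, _, SimpleGraph.Walk.cons h p, 0, hj => by
      simp [SimpleGraph.Walk.edges_cons, SimpleGraph.Walk.getVert_zero,
        SimpleGraph.Walk.getVert_cons_succ]
  | _, _, SimpleGraph.Walk.cons h p, (j+1), hj => by
      simp only [SimpleGraph.Walk.edges_cons, List.getElem_cons_succ,
        SimpleGraph.Walk.getVert_cons_succ]
      exact aux_edges_getElem p j (by simpa using hj)

private lemma aux_support_getElem {G : SimpleGraph V} :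
    ∀ {u v : V} (p : G.Walk u v) (j : ℕ) (hj : j < p.support.length),
      p.support[j] = p.getVert j
  | _, _, SimpleGraph.Walk.nil, 0, hj => by simp [SimpleGraph.Walk.getVert_zero]
  | _, _, SimpleGraph.Walk.nil, (j+1), hj => by simp at hj
  | _, _, SimpleGraph.Walk.cons h p, 0, hj => by simp [SimpleGraph.Walk.getVert_zero]
  | _, _, SimpleGraph.Walk.cons h p, (j+1), hj => by
      simp only [SimpleGraph.Walk.support_cons, List.getElem_cons_succ,
        SimpleGraph.Walk.getVert_cons_succ]
      exact aux_support_getElem p j (by simpa using hj)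

private lemma aux_getVert_injOn {G : SimpleGraph V} {u v : V} {p : G.Walk u v}
    (hp : p.IsPath) : ∀ i, i ≤ p.length → ∀ j, j ≤ p.length →
      p.getVert i = p.getVert j → i = j := by
  intro i hi j hj hij
  have hi' : i < p.support.length := by rw [SimpleGraph.Walk.length_support]; omega
  have hj' : j < p.support.length := by rw [SimpleGraph.Walk.length_support]; omega
  have : p.support[i] = p.support[j] := by
    rw [aux_support_getElem p i hi', aux_support_getElem p j hj', hij]
  exact (List.Nodup.getElem_inj_iff hp.support_nodup).mp this
private lemma aux_tight_symm {w : Sym2 V → ℝ} {y : V → ℝ} {𝓑 : Finset (Finset V)}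
    {z : Finset V → ℝ} {u v : V} (h : Tight w y 𝓑 z u v) : Tight w y 𝓑 z v u := by
  unfold Tight dualLoad at h ⊢
  rw [Sym2.eq_swap] at h
  rw [h]
  have : 𝓑.filter (fun B => v ∈ B ∧ u ∈ B) = 𝓑.filter (fun B => u ∈ B ∧ v ∈ B) :=
    Finset.filter_congr (fun B _ => and_comm)
  rw [this]; ring

private lemma aux_list_sum (M : Finset (Sym2 V)) (w : Sym2 V → ℝ) (l : List (Sym2 V)) :
    ((l.filter fun e => e ∉ M).map w).sum - ((l.filter fun e => e ∈ M).map w).sum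
      = (l.map fun e => if e ∈ M then -w e else w e).sum := by
  induction l with
  | nil => simp
  | cons e l ih =>
    by_cases he : e ∈ M <;> simp [List.filter_cons, he, decide_not] at ih ⊢ <;>
      rw [← ih] <;> ring

private lemma aux_map_sum {α : Type*} (g : α → ℝ) (l : List α) :
    (l.map g).sum = ∑ j : Fin l.length, g l[(j : ℕ)] := by
  conv_lhs => rw [← List.ofFn_get l]
  rw [List.map_ofFn, List.sum_ofFn]
  rfl

private lemma aux_tele (f : ℕ → ℝ) (m : ℕ) :
    ∑ j ∈ Finset.range (2 * m + 1), (-1 : ℝ) ^ j * (f j + f (j + 1))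
      = f 0 + f (2 * m + 1) := by
  induction m with
  | zero => simp
  | succ m ih =>
    rw [show 2 * (m + 1) + 1 = (2 * m + 1) + 1 + 1 from by ring]
    rw [Finset.sum_range_succ, Finset.sum_range_succ, ih]
    have e1 : (-1 : ℝ) ^ (2 * m + 1) = -1 := Odd.neg_one_pow ⟨m, by ring⟩
    have e2 : (-1 : ℝ) ^ (2 * m + 1 + 1) = 1 := Even.neg_one_pow ⟨m + 1, by ring⟩
    rw [e1, e2]; ring
set_option maxHeartbeats 1000000 in
theorem max_weight_augmenting_path_characterization
    {V : Type*} (G : SimpleGraph V) (M : Finset (Sym2 V))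
    (w : Sym2 V → ℝ) (y : V → ℝ) (𝓑 : Finset (Finset V)) (z : Finset V → ℝ)
    (base : Finset V → V)
    (hM : IsMatchingSet G M)
    (h𝓑 : ∀ B ∈ 𝓑, InternallyNearMatched M B (base B))
    (hz : ∀ B ∈ 𝓑, 0 ≤ z B)
    (hdom : ∀ u v : V, G.Adj u v → Dominated w y 𝓑 z u v)
    (htight : ∀ u v : V, s(u, v) ∈ M → Tight w y 𝓑 z u v)
    {f₁ f₂ : V} (P : G.Walk f₁ f₂) (hP : IsAugmenting M P) :
    pathWeight w M P = y f₁ + y f₂ ↔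
      ((∀ u v : V, s(u, v) ∈ P.edges → Tight w y 𝓑 z u v) ∧
        ∀ B ∈ 𝓑, 0 < z B → GammaEdgesSingleEvenAltAtBase M P B (base B)) := by
  classical
  obtain ⟨hpath, hne, hfree1, hfree2, halt⟩ := hP
  have hlenedges : P.edges.length = P.length := P.length_edges
  have hedge : ∀ j (hj : j < P.edges.length),
      P.edges[j] = s(P.getVert j, P.getVert (j + 1)) := aux_edges_getElem P
  have hk1 : 0 < P.length := by
    cases P with
    | nil => exact absurd rfl hne
    | cons h q => simp
  have hchain := List.isChain_iff_getElem.mp halt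
  have hparE : ∀ j, ∀ (hj : j < P.edges.length), (P.edges[j] ∈ M ↔ Odd j) := by
    intro j
    induction j with
    | zero =>
      intro hj
      have hmem : f₁ ∈ P.edges[0] := by
        rw [hedge 0 hj, P.getVert_zero]
        exact Sym2.mem_mk_left _ _
      constructor
      · intro hm; exact absurd hmem (hfree1 _ hm)
      · intro h; exact absurd h (by simp [Nat.odd_iff])
    | succ j ih =>
      intro hj
      have hj' : j < P.edges.length := by omega
      have hR := hchain j (by omega)
      have hR' : ¬ (P.edges[j]'hj' ∈ M ↔ P.edges[j + 1]'hj ∈ M) := hR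
      have hih := ih hj'
      rw [Nat.odd_add_one]
      tauto
  have hkodd : Odd P.length := by
    have hj' : P.length - 1 < P.edges.length := by omega
    have hlast : f₂ ∈ P.edges[P.length - 1]'hj' := by
      rw [hedge _ hj', show P.length - 1 + 1 = P.length from by omega, P.getVert_length]
      exact Sym2.mem_mk_right _ _
    have hno : ¬ Odd (P.length - 1) := fun ho =>
      hfree2 _ ((hparE _ hj').mpr ho) hlast
    rw [Nat.odd_iff] at hno ⊢
    omega
  have hpar : ∀ j, j < P.length → (s(P.getVert j, P.getVert (j + 1)) ∈ M ↔ Odd j) := by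
    intro j hjk
    have hj' : j < P.edges.length := by omega
    rw [← hedge j hj']
    exact hparE j hj'
  set c : ℕ → ℝ := fun j => (-1 : ℝ) ^ j * w s(P.getVert j, P.getVert (j + 1)) with hc
  set d : ℕ → ℝ :=
    fun j => (-1 : ℝ) ^ j * dualLoad y 𝓑 z (P.getVert j) (P.getVert (j + 1)) with hd
  set DR : Finset V → ℝ := fun B => ∑ j ∈ Finset.range P.length,
    (if P.getVert j ∈ B ∧ P.getVert (j + 1) ∈ B then (-1 : ℝ) ^ j else 0) with hDR
  set Dint : Finset V → ℤ := fun B => ∑ j ∈ (Finset.range P.length).filter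
    (fun j => P.getVert j ∈ B ∧ P.getVert (j + 1) ∈ B), (-1 : ℤ) ^ j with hDint
  have hW : pathWeight w M P = ∑ j ∈ Finset.range P.length, c j := by
    unfold pathWeight
    rw [aux_list_sum M w P.edges, aux_map_sum, ← hlenedges, Finset.sum_range]
    refine Finset.sum_congr rfl (fun j _ => ?_)
    have hjlt : (j : ℕ) < P.length := by have := j.isLt; omega
    rw [hedge j j.isLt]
    simp only [hc]
    rcases Nat.even_or_odd (j : ℕ) with he | ho
    · rw [if_neg (by rw [hpar _ hjlt]; simp [Nat.odd_iff]; simp [Nat.even_iff] at he; omega),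
        he.neg_one_pow, one_mul]
    · rw [if_pos ((hpar _ hjlt).mpr ho), ho.neg_one_pow]
      ring
  have hD : ∑ j ∈ Finset.range P.length, d j
      = y f₁ + y f₂ + ∑ B ∈ 𝓑, z B * DR B := by
    have h1 : ∀ j ∈ Finset.range P.length, d j
        = (-1 : ℝ) ^ j * (y (P.getVert j) + y (P.getVert (j + 1)))
          + ∑ B ∈ 𝓑, (if P.getVert j ∈ B ∧ P.getVert (j + 1) ∈ B
              then (-1 : ℝ) ^ j * z B else 0) := by
      intro j _
      simp only [hd]
      unfold dualLoad
      rw [Finset.sum_filter, mul_add, Finset.mul_sum]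
      congr 1
      exact Finset.sum_congr rfl (fun B _ => by rw [mul_ite, mul_zero])
    rw [Finset.sum_congr rfl h1, Finset.sum_add_distrib]
    congr 1
    · obtain ⟨m, hm⟩ := hkodd
      rw [hm, aux_tele (fun j => y (P.getVert j)), ← hm, P.getVert_zero, P.getVert_length]
    · rw [Finset.sum_comm]
      refine Finset.sum_congr rfl (fun B _ => ?_)
      simp only [hDR]
      rw [Finset.mul_sum]
      exact Finset.sum_congr rfl (fun j _ => by rw [mul_ite, mul_zero, mul_comm])
  have hDRf : ∀ B, DR B = ∑ j ∈ (Finset.range P.length).filter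
      (fun j => P.getVert j ∈ B ∧ P.getVert (j + 1) ∈ B), (-1 : ℝ) ^ j :=
    fun B => (Finset.sum_filter _ _).symm
  have hcast : ∀ B, DR B = ((Dint B : ℤ) : ℝ) := by
    intro B
    rw [hDRf]
    simp only [hDint]
    push_cast
    rfl
  have huniqB : ∀ b : V, ∀ i j : ℕ, (i ≤ P.length ∧ P.getVert i = b) →
      (j ≤ P.length ∧ P.getVert j = b) → i = j := by
    rintro b i j ⟨hi, hib⟩ ⟨hj, hjb⟩
    exact aux_getVert_injOn hpath i hi j hj (hib.trans hjb.symm)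
  have hH1B : ∀ B ∈ 𝓑, ∀ j, j ≤ P.length → Odd j → P.getVert j ∈ B →
      ¬ (j ≤ P.length ∧ P.getVert j = base B) →
      j < P.length ∧ P.getVert (j + 1) ∈ B := by
    intro B hB j hjk hodd hTj hnb
    have hnb' : P.getVert j ≠ base B := fun h => hnb ⟨hjk, h⟩
    obtain ⟨hbB, hbM, hmat⟩ := h𝓑 B hB
    obtain ⟨u, huB, huv, huM⟩ := hmat _ hTj hnb'
    have hjlt : j < P.length := by
      rcases Nat.lt_or_ge j P.length with h | h
      · exact h
      · exfalso
        have hgv : P.getVert j = f₂ := by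
          rw [show j = P.length from by omega, P.getVert_length]
        have hmem : P.getVert j ∈ s(u, P.getVert j) := Sym2.mem_mk_right _ _
        rw [hgv] at hmem huM
        exact hfree2 _ huM hmem
    have hej : s(P.getVert j, P.getVert (j + 1)) ∈ M := (hpar j hjlt).mpr hodd
    have heq : s(P.getVert j, P.getVert (j + 1)) = s(u, P.getVert j) := by
      by_contra hne'
      exact hM.2 _ hej _ huM hne' (P.getVert j) (Sym2.mem_mk_left _ _)
        (Sym2.mem_mk_right _ _)
    rcases Sym2.eq_iff.mp heq with ⟨h1, h2⟩ | ⟨h1, h2⟩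
    · exact absurd h1.symm huv
    · exact ⟨hjlt, by rw [h2]; exact huB⟩
  have hH2B : ∀ B ∈ 𝓑, ∀ j, j ≤ P.length → Even j → P.getVert j ∈ B →
      ¬ (j ≤ P.length ∧ P.getVert j = base B) →
      0 < j ∧ P.getVert (j - 1) ∈ B := by
    intro B hB j hjk heven hTj hnb
    have hnb' : P.getVert j ≠ base B := fun h => hnb ⟨hjk, h⟩
    obtain ⟨hbB, hbM, hmat⟩ := h𝓑 B hB
    obtain ⟨u, huB, huv, huM⟩ := hmat _ hTj hnb'
    have hj0 : 0 < j := by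
      rcases Nat.eq_zero_or_pos j with h | h
      · exfalso
        have hgv : P.getVert j = f₁ := by rw [h, P.getVert_zero]
        have hmem : P.getVert j ∈ s(u, P.getVert j) := Sym2.mem_mk_right _ _
        rw [hgv] at hmem huM
        exact hfree1 _ huM hmem
      · exact h
    have hjlt : j - 1 < P.length := by omega
    have hodd : Odd (j - 1) := by
      rw [Nat.odd_iff]; rw [Nat.even_iff] at heven; omega
    have hej : s(P.getVert (j - 1), P.getVert (j - 1 + 1)) ∈ M := (hpar _ hjlt).mpr hodd
    rw [show j - 1 + 1 = j from by omega] at hej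
    have heq : s(P.getVert (j - 1), P.getVert j) = s(u, P.getVert j) := by
      by_contra hne'
      exact hM.2 _ hej _ huM hne' (P.getVert j) (Sym2.mem_mk_right _ _)
        (Sym2.mem_mk_right _ _)
    rcases Sym2.eq_iff.mp heq with ⟨h1, h2⟩ | ⟨h1, h2⟩
    · exact ⟨hj0, by rw [h1]; exact huB⟩
    · exact absurd h2.symm huv
  have hstruct : ∀ B ∈ 𝓑, Dint B = 0 →
      GammaEdgesSingleEvenAltAtBase M P B (base B) := by
    intro B hB h0
    simp only [hDint] at h0
    rcases aux_core_eq P.length (fun j => P.getVert j ∈ B)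
      (fun j => j ≤ P.length ∧ P.getVert j = base B) _
      (fun j => by simp [Finset.mem_filter, Finset.mem_range, and_assoc])
      (huniqB (base B)) (hH1B B hB) (hH2B B hB) h0 with
      h | ⟨i, n, hn0, hneven, hink, hiff, hbase⟩
    · left
      intro e he
      obtain ⟨j, hj, rfl⟩ := List.getElem_of_mem he
      rw [hedge j hj, Sym2.ball]
      exact h j (by omega)
    · right
      refine ⟨i, n, hn0, hneven, by omega, ?_, ?_, ?_⟩
      · intro j hj
        rw [hedge j hj, Sym2.ball]
        exact hiff j (by omega)
      · exact List.IsChain.take (List.IsChain.drop halt i) n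
      · rcases hbase with ⟨_, hb⟩ | ⟨_, hb⟩
        · exact Or.inl hb.symm
        · exact Or.inr hb.symm
  have hDR0 : ∀ B ∈ 𝓑, GammaEdgesSingleEvenAltAtBase M P B (base B) → DR B = 0 := by
    intro B hB hg
    rw [hDRf]
    rcases hg with h | ⟨i, n, hn0, hneven, hink, hiff, _, _⟩
    · rw [Finset.filter_false_of_mem, Finset.sum_empty]
      intro j hj
      have hjk := Finset.mem_range.mp hj
      have hj' : j < P.edges.length := by omega
      have hmem := h _ (List.getElem_mem hj')
      rw [hedge j hj', Sym2.ball] at hmem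
      exact hmem
    · have hfilt : (Finset.range P.length).filter
          (fun j => P.getVert j ∈ B ∧ P.getVert (j + 1) ∈ B) = Finset.Ico i (i + n) := by
        ext j
        simp only [Finset.mem_filter, Finset.mem_range, Finset.mem_Ico]
        constructor
        · rintro ⟨hjk, hT⟩
          have hj' : j < P.edges.length := by omega
          exact (hiff j hj').mp (by rw [hedge j hj', Sym2.ball]; exact hT)
        · rintro ⟨h1, h2⟩
          have hj' : j < P.edges.length := by omega
          have hT := (hiff j hj').mpr ⟨h1, h2⟩
          rw [hedge j hj', Sym2.ball] at hT
          exact ⟨by omega, hT⟩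
      rw [hfilt, aux_sum_Ico_neg_one_pow, if_pos hneven]
  have hodd_eq : ∀ j, j < P.length → Odd j → c j = d j := by
    intro j hjk hodd
    have hT := htight _ _ ((hpar j hjk).mpr hodd)
    unfold Tight at hT
    simp only [hc, hd]
    rw [hT]
  have hle : ∀ j ∈ Finset.range P.length, c j ≤ d j := by
    intro j hj
    have hjk := Finset.mem_range.mp hj
    rcases Nat.even_or_odd j with he | ho
    · have hdom' := hdom _ _ (P.adj_getVert_succ hjk)
      unfold Dominated at hdom'
      simp only [hc, hd]
      rw [he.neg_one_pow, one_mul, one_mul]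
      exact hdom'
    · exact le_of_eq (hodd_eq j hjk ho)
  have hZle : ∀ B ∈ 𝓑, z B * DR B ≤ 0 := by
    intro B hB
    have hDle : Dint B ≤ 0 := by
      simp only [hDint]
      exact aux_core_le P.length (fun j => P.getVert j ∈ B)
        (fun j => j ≤ P.length ∧ P.getVert j = base B) _
        (fun j => by simp [Finset.mem_filter, Finset.mem_range, and_assoc])
        (huniqB (base B)) (hH1B B hB) (hH2B B hB)
    have hDRle : DR B ≤ 0 := by
      rw [hcast B]; exact_mod_cast hDle
    have := mul_le_mul_of_nonneg_left hDRle (hz B hB)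
    simpa using this
  rw [hW]
  constructor
  · intro hEq
    have hsum_le : ∑ j ∈ Finset.range P.length, c j
        ≤ ∑ j ∈ Finset.range P.length, d j := Finset.sum_le_sum hle
    have hZ : ∑ B ∈ 𝓑, z B * DR B ≤ 0 := Finset.sum_nonpos hZle
    have hZ0 : ∑ B ∈ 𝓑, z B * DR B = 0 := by
      rw [hEq, hD] at hsum_le
      linarith
    have hsum_eq : ∑ j ∈ Finset.range P.length, c j
        = ∑ j ∈ Finset.range P.length, d j := by
      rw [hEq, hD, hZ0]; ring
    have hdc : ∑ j ∈ Finset.range P.length, (d j - c j) = 0 := by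
      rw [Finset.sum_sub_distrib, hsum_eq, sub_self]
    have hceq : ∀ j ∈ Finset.range P.length, c j = d j := by
      intro j hj
      have := (Finset.sum_eq_zero_iff_of_nonneg
        (fun j hj => sub_nonneg.mpr (hle j hj))).mp hdc j hj
      linarith
    constructor
    · intro u v huv
      obtain ⟨j, hj, hjuv⟩ := List.getElem_of_mem huv
      have hjk : j < P.length := by omega
      have hpow : ((-1 : ℝ) ^ j) ≠ 0 := pow_ne_zero j (by norm_num)
      have hT : Tight w y 𝓑 z (P.getVert j) (P.getVert (j + 1)) := by
        have hcd := hceq j (Finset.mem_range.mpr hjk)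
        simp only [hc, hd] at hcd
        exact mul_left_cancel₀ hpow hcd
      rw [hedge j hj] at hjuv
      rcases Sym2.eq_iff.mp hjuv with ⟨h1, h2⟩ | ⟨h1, h2⟩
      · rw [← h1, ← h2]; exact hT
      · rw [← h1, ← h2]; exact aux_tight_symm hT
    · intro B hB hzB
      have h0 : z B * DR B = 0 := (Finset.sum_eq_zero_iff_of_nonpos hZle).mp hZ0 B hB
      have hDR0' : DR B = 0 := by
        rcases mul_eq_zero.mp h0 with h | h
        · exact absurd h (by linarith)
        · exact h
      have hDi : Dint B = 0 := by
        rw [hcast B] at hDR0'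
        exact_mod_cast hDR0'
      exact hstruct B hB hDi
  · rintro ⟨htightP, hgamma⟩
    have hceq : ∀ j ∈ Finset.range P.length, c j = d j := by
      intro j hj
      have hjk := Finset.mem_range.mp hj
      have hj' : j < P.edges.length := by omega
      have hmemE : s(P.getVert j, P.getVert (j + 1)) ∈ P.edges := by
        rw [← hedge j hj']
        exact List.getElem_mem hj'
      have hT := htightP _ _ hmemE
      unfold Tight at hT
      simp only [hc, hd]
      rw [hT]
    have hZ0 : ∀ B ∈ 𝓑, z B * DR B = 0 := by
      intro B hB
      rcases eq_or_lt_of_le (hz B hB) with h | h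
      · rw [← h, zero_mul]
      · rw [hDR0 B hB (hgamma B hB h), mul_zero]
    rw [Finset.sum_congr rfl hceq, hD, Finset.sum_eq_zero hZ0, add_zero]
end

section
/- Let C be a cycle with vertices v₀, v₁, …, v₂ₖ (k ≥ 1, in cyclic order, so its edges are v₀v₁, v₁v₂, …, v₂ₖ₋₁v₂ₖ, v₂ₖv₀), and suppose the matched edges of M with both ends on C are exactly the edges v₂ᵢ₋₁v₂ᵢ for i = 1, …, k. Then every vertex v of C admits an even-length alternating path from v to v₀ using only edges of C, which, when v ≠ v₀, starts with the matched edge incident to v (for v = v₀ the path has no edges). -/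
open SimpleGraph

attribute [local instance] Classical.propDecidable

variable {V : Type*}

set_option maxHeartbeats 1000000 in
theorem blossom_cycle_even_alternating_path_to_base
    {V : Type*} [DecidableEq V] (G : SimpleGraph V) (M : Finset (Sym2 V))
    (k : ℕ) (hk : 1 ≤ k) (v : Fin (2 * k + 1) → V)
    (hM : IsMatchingSet G M)
    (hinj : Function.Injective v)
    (hadj : ∀ i : ℕ, ∀ h : i < 2 * k,
      G.Adj (v ⟨i, by omega⟩) (v ⟨i + 1, by omega⟩))
    (hadj' : G.Adj (v ⟨2 * k, by omega⟩) (v ⟨0, by omega⟩))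
    (hmatch : ∀ e : Sym2 V,
      (e ∈ M ∧ ∀ x ∈ e, ∃ i, x = v i) ↔
        ∃ i : ℕ, ∃ h : i < k,
          e = s(v ⟨2 * i + 1, by omega⟩, v ⟨2 * i + 2, by omega⟩)) :
    ∀ i : Fin (2 * k + 1), ∃ Q : G.Walk (v i) (v ⟨0, by omega⟩),
      Q.IsPath ∧ Even Q.length ∧ IsAlternating M Q ∧
      (∀ e ∈ Q.edges,
        (∃ j : ℕ, ∃ h : j < 2 * k, e = s(v ⟨j, by omega⟩, v ⟨j + 1, by omega⟩)) ∨
          e = s(v ⟨2 * k, by omega⟩, v ⟨0, by omega⟩)) ∧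
      (v i ≠ v ⟨0, by omega⟩ → ∃ h : Q.edges ≠ [], Q.edges.head h ∈ M) ∧
      (v i = v ⟨0, by omega⟩ → Q.length = 0) := by
  classical
  have vinj : ∀ {a b : ℕ} (ha : a < 2*k+1) (hb : b < 2*k+1),
      v ⟨a, ha⟩ = v ⟨b, hb⟩ → a = b := by
    intro a b ha hb h
    exact congrArg Fin.val (hinj h)
  have sveq : ∀ (a b a' b' : ℕ) (ha : a < 2*k+1) (hb : b < 2*k+1)
      (ha' : a' < 2*k+1) (hb' : b' < 2*k+1), a = a' → b = b' →
      s(v ⟨a, ha⟩, v ⟨b, hb⟩) = s(v ⟨a', ha'⟩, v ⟨b', hb'⟩) := by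
    intro a b a' b' ha hb ha' hb' h1 h2
    subst h1; subst h2; rfl
  have memM' : ∀ (a b : ℕ) (ha : a < 2*k+1) (hb : b < 2*k+1),
      (s(v ⟨a, ha⟩, v ⟨b, hb⟩) ∈ M ↔
        (b = a + 1 ∧ a % 2 = 1) ∨ (a = b + 1 ∧ b % 2 = 1)) := by
    intro a b ha hb
    constructor
    · intro hmem
      have hall : ∀ x ∈ s(v ⟨a, ha⟩, v ⟨b, hb⟩), ∃ i, x = v i := by
        intro x hx
        rw [Sym2.mem_iff] at hx
        rcases hx with h | h
        · exact ⟨_, h⟩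
        · exact ⟨_, h⟩
      obtain ⟨i, hi, heq⟩ := (hmatch _).mp ⟨hmem, hall⟩
      rw [Sym2.eq_iff] at heq
      rcases heq with ⟨h1, h2⟩ | ⟨h1, h2⟩
      · have e1 := vinj _ _ h1
        have e2 := vinj _ _ h2
        omega
      · have e1 := vinj _ _ h1
        have e2 := vinj _ _ h2
        omega
    · intro hcond
      rcases hcond with ⟨hb1, hodd⟩ | ⟨ha1, hodd⟩
      · obtain ⟨c, hc⟩ : ∃ c, a = 2*c+1 := ⟨a/2, by omega⟩
        have hck : c < k := by omega
        have heq : s(v ⟨a, ha⟩, v ⟨b, hb⟩)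
            = s(v ⟨2*c+1, by omega⟩, v ⟨2*c+2, by omega⟩) :=
          sveq _ _ _ _ _ _ _ _ (by omega) (by omega)
        rw [heq]
        exact ((hmatch _).mpr ⟨c, hck, rfl⟩).1
      · obtain ⟨c, hc⟩ : ∃ c, b = 2*c+1 := ⟨b/2, by omega⟩
        have hck : c < k := by omega
        have heq : s(v ⟨a, ha⟩, v ⟨b, hb⟩)
            = s(v ⟨2*c+2, by omega⟩, v ⟨2*c+1, by omega⟩) :=
          sveq _ _ _ _ _ _ _ _ (by omega) (by omega)
        rw [heq, Sym2.eq_swap]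
        exact ((hmatch _).mpr ⟨c, hck, rfl⟩).1
  -- downward walks : from v j to v 0
  have D : ∀ j (hj : j ≤ 2*k), ∃ Q : G.Walk (v ⟨j, by omega⟩) (v ⟨0, by omega⟩),
      Q.length = j ∧
      (∀ x ∈ Q.support, ∃ m, ∃ hm : m ≤ j, x = v ⟨m, by omega⟩) ∧
      Q.IsPath ∧ IsAlternating M Q ∧
      (∀ e ∈ Q.edges, ∃ m, ∃ hm : m < j, e = s(v ⟨m, by omega⟩, v ⟨m+1, by omega⟩)) ∧
      (∀ hj0 : j ≠ 0, ∃ hne : Q.edges ≠ [],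
        Q.edges.head hne = s(v ⟨j, by omega⟩, v ⟨j-1, by omega⟩)) := by
    intro j
    induction j with
    | zero =>
      intro _
      refine ⟨.nil, by simp, ?_, by simp, by simp [_root_.IsAlternating, List.Chain'], by simp, by simp⟩
      intro x hx
      simp only [Walk.support_nil, List.mem_singleton] at hx
      exact ⟨0, by omega, hx⟩
    | succ j ih =>
      intro hj
      obtain ⟨Q, hlen, hsup, hpath, halt, hedges, hhead⟩ := ih (by omega)
      have hadjj : G.Adj (v ⟨j+1, by omega⟩) (v ⟨j, by omega⟩) := (hadj j (by omega)).symm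
      refine ⟨.cons hadjj Q, by rw [Walk.length_cons, hlen], ?_, ?_, ?_, ?_, ?_⟩
      · intro x hx
        rw [Walk.support_cons] at hx
        rcases List.mem_cons.mp hx with h | h
        · exact ⟨j+1, le_refl _, h⟩
        · obtain ⟨m, hm, rfl⟩ := hsup x h
          exact ⟨m, by omega, rfl⟩
      · apply hpath.cons
        intro hmem
        obtain ⟨m, hm, hx⟩ := hsup _ hmem
        have := vinj _ _ hx
        omega
      · show List.Chain' _ (Walk.cons hadjj Q).edges
        rw [Walk.edges_cons]
        refine List.isChain_cons.mpr ⟨?_, halt⟩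
        intro y hy
        have hne : Q.edges ≠ [] := by
          intro h; rw [h] at hy; simp at hy
        have hj0 : j ≠ 0 := by
          intro h
          apply hne
          apply List.eq_nil_of_length_eq_zero
          rw [Walk.length_edges, hlen, h]
        obtain ⟨hne', hhd⟩ := hhead hj0
        rw [List.head?_eq_head hne'] at hy
        simp only [Option.mem_some_iff] at hy
        subst hy
        rw [hhd, memM', memM']
        omega
      · intro e he
        rw [Walk.edges_cons] at he
        rcases List.mem_cons.mp he with h | h
        · rw [Sym2.eq_swap] at h
          exact ⟨j, by omega, h⟩
        · obtain ⟨m, hm, rfl⟩ := hedges e h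
          exact ⟨m, by omega, rfl⟩
      · intro _
        refine ⟨by rw [Walk.edges_cons]; exact List.cons_ne_nil _ _, ?_⟩
        simp only [Walk.edges_cons, List.head_cons]
        exact sveq _ _ _ _ _ _ _ _ rfl (by omega)
  -- upward walks : from v m to v (2k), m + d = 2k
  have U : ∀ d m (hm : m + d = 2*k),
      ∃ Q : G.Walk (v ⟨m, by omega⟩) (v ⟨2*k, by omega⟩),
      Q.length = d ∧
      (∀ x ∈ Q.support, ∃ a, ∃ ha : a ≤ 2*k, m ≤ a ∧ x = v ⟨a, by omega⟩) ∧
      Q.IsPath ∧ IsAlternating M Q ∧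
      (∀ e ∈ Q.edges, ∃ a, ∃ ha : a < 2*k, m ≤ a ∧
        e = s(v ⟨a, by omega⟩, v ⟨a+1, by omega⟩)) ∧
      (∀ hd0 : d ≠ 0, ∃ hne : Q.edges ≠ [],
        Q.edges.head hne = s(v ⟨m, by omega⟩, v ⟨m+1, by omega⟩) ∧
        Q.edges.getLast hne = s(v ⟨2*k-1, by omega⟩, v ⟨2*k, by omega⟩)) := by
    intro d
    induction d with
    | zero =>
      intro m hm
      have hm' : m = 2*k := by omega
      subst hm'
      refine ⟨.nil, by simp, ?_, by simp, by simp [_root_.IsAlternating, List.Chain'], by simp, by simp⟩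
      intro x hx
      simp only [Walk.support_nil, List.mem_singleton] at hx
      exact ⟨2*k, by omega, by omega, hx⟩
    | succ d ih =>
      intro m hm
      obtain ⟨Q, hlen, hsup, hpath, halt, hedges, hht⟩ := ih (m+1) (by omega)
      have hadjm : G.Adj (v ⟨m, by omega⟩) (v ⟨m+1, by omega⟩) := hadj m (by omega)
      refine ⟨.cons hadjm Q, by simp [hlen], ?_, ?_, ?_, ?_, ?_⟩
      · intro x hx
        rw [Walk.support_cons] at hx
        rcases List.mem_cons.mp hx with h | h
        · exact ⟨m, by omega, le_refl _, h⟩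
        · obtain ⟨a, ha, ham, rfl⟩ := hsup x h
          exact ⟨a, ha, by omega, rfl⟩
      · apply hpath.cons
        intro hmem
        obtain ⟨a, ha, ham, hx⟩ := hsup _ hmem
        have := vinj _ _ hx
        omega
      · show List.Chain' _ (Walk.cons hadjm Q).edges
        rw [Walk.edges_cons]
        refine List.isChain_cons.mpr ⟨?_, halt⟩
        intro y hy
        have hne : Q.edges ≠ [] := by
          intro h; rw [h] at hy; simp at hy
        have hd0 : d ≠ 0 := by
          intro h
          apply hne
          apply List.eq_nil_of_length_eq_zero
          rw [Walk.length_edges, hlen, h]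
        obtain ⟨hne', hhd, _⟩ := hht hd0
        rw [List.head?_eq_head hne'] at hy
        simp only [Option.mem_some_iff] at hy
        subst hy
        rw [hhd, memM', memM']
        omega
      · intro e he
        rw [Walk.edges_cons] at he
        rcases List.mem_cons.mp he with h | h
        · exact ⟨m, by omega, le_refl _, h⟩
        · obtain ⟨a, ha, ham, rfl⟩ := hedges e h
          exact ⟨a, ha, by omega, rfl⟩
      · intro _
        have hne : (Walk.cons hadjm Q).edges ≠ [] := by simp [Walk.edges_cons]
        refine ⟨hne, ?_, ?_⟩
        · simp only [Walk.edges_cons, List.head_cons]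
        · by_cases hd0 : d = 0
          · have hq : Q.edges = [] := by
              apply List.eq_nil_of_length_eq_zero
              rw [Walk.length_edges, hlen, hd0]
            simp only [Walk.edges_cons, hq, List.getLast_singleton]
            exact sveq _ _ _ _ _ _ _ _ (by omega) (by omega)
          · obtain ⟨hne', _, hlst⟩ := hht hd0
            simp only [Walk.edges_cons]
            rw [List.getLast_cons hne']
            exact hlst
  -- main proof
  intro i
  rcases Nat.even_or_odd i.1 with he | ho
  · obtain ⟨Q, hlen, hsup, hpath, halt, hedges, hhead⟩ := D i.1 (by omega)
    refine ⟨Q, hpath, by rw [hlen]; exact he, halt, ?_, ?_, ?_⟩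
    · intro e hem
      obtain ⟨m, hm, rfl⟩ := hedges e hem
      exact Or.inl ⟨m, by omega, rfl⟩
    · intro hne0
      have hi0 : i.1 ≠ 0 := by
        intro h
        exact hne0 (by exact congrArg v (Fin.ext h))
      obtain ⟨hne, hhd⟩ := hhead hi0
      refine ⟨hne, ?_⟩
      rw [hhd, memM']
      rw [Nat.even_iff] at he
      omega
    · intro h0
      have hi0 : i.1 = 0 := vinj _ _ h0
      rw [hlen, hi0]
  · have hn : i.1 < 2*k := by
      rcases ho with ⟨c, hc⟩; omega
    have hi1 : 1 ≤ i.1 := by rcases ho with ⟨c, hc⟩; omega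
    obtain ⟨Q, hlen, hsup, hpath, halt, hedges, hht⟩ := U (2*k - i.1) i.1 (by omega)
    obtain ⟨hne, hhd, hlst⟩ := hht (by omega)
    refine ⟨Q.append (Walk.cons hadj' Walk.nil), ?_, ?_, ?_, ?_, ?_, ?_⟩
    · rw [Walk.isPath_def, Walk.support_append, Walk.support_cons, Walk.support_nil]
      simp only [List.tail_cons]
      rw [List.nodup_append]
      refine ⟨hpath.support_nodup, by simp, ?_⟩
      intro x hx y hy hx0
      simp only [List.mem_singleton] at hy
      subst hy
      subst hx0
      obtain ⟨a, ha, ham, hx⟩ := hsup _ hx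
      have := vinj _ _ hx
      omega
    · rw [Walk.length_append, hlen]
      simp only [Walk.length_cons, Walk.length_nil]
      rw [Nat.even_iff]
      rcases ho with ⟨c, hc⟩
      omega
    · show List.Chain' _ _
      rw [Walk.edges_append, Walk.edges_cons, Walk.edges_nil]
      apply List.IsChain.append halt (by simp)
      intro x hx y hy
      rw [List.getLast?_eq_getLast hne] at hx
      simp only [Option.mem_some_iff] at hx
      simp only [List.head?_cons, Option.mem_some_iff] at hy
      subst hx; subst hy
      rw [hlst, memM', memM']
      omega
    · intro e he
      rw [Walk.edges_append, Walk.edges_cons, Walk.edges_nil, List.mem_append] at he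
      rcases he with h | h
      · obtain ⟨a, ha, ham, rfl⟩ := hedges e h
        exact Or.inl ⟨a, ha, rfl⟩
      · simp only [List.mem_singleton] at h
        exact Or.inr h
    · intro _
      have hne' : (Q.append (Walk.cons hadj' Walk.nil)).edges ≠ [] := by
        rw [Walk.edges_append]
        intro h
        exact hne (List.append_eq_nil_iff.mp h).1
      refine ⟨hne', ?_⟩
      have heq : (Q.append (Walk.cons hadj' Walk.nil)).edges.head hne' = Q.edges.head hne := by
        simp only [Walk.edges_append]
        exact List.head_append_of_ne_nil hne
      rw [heq, hhd, memM']
      rcases ho with ⟨c, hc⟩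
      omega
    · intro h0
      have := vinj _ _ h0
      omega
end
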